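/- For every constrained critical pair s ≈ t [φ] of the LCTRS R and every substitution σ with σ ⊨ φ, either (1) sσ = tσ, or (2) there exist a critical pair u ≈ v of the transformed TRS R̄ and a substitution δ such that sσ = uδ and tσ = vδ. -/

import Mathlib

namespace LCT

/-! ### First-order terms over signature `F` with natural-number variables -/

inductive Term (F : Type) : Type
  | var : ℕ → Term F
  | app : F → List (Term F) → Term F

instance {F : Type} : Inhabited (Term F) := ⟨Term.var 0⟩

namespace Term

variable {F : Type}

/-- Application of a substitution (total map from variables to terms). -/
def subst (σ : ℕ → Term F) : Term F → Term F
  | var x => σ x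
  | app f ts => app f (ts.attach.map fun ⟨t, _⟩ => subst σ t)

/-- The list of (occurrences of) variables of a term. -/
def varsList : Term F → List ℕ
  | var x => [x]
  | app _ ts => (ts.attach.map fun ⟨t, _⟩ => varsList t).flatten

/-- The set of variables of a term. -/
def vars (t : Term F) : Set ℕ := {x | x ∈ t.varsList}

/-- Number of occurrences of the variable `x` in a term. -/
def count (x : ℕ) : Term F → ℕ
  | var y => if y = x then 1 else 0
  | app _ ts => (ts.attach.map fun ⟨t, _⟩ => count x t).sum

/-- The subterm at a position (a position is a list of argument indices). -/
def subtermAt : Term F → List ℕ → Option (Term F)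
  | t, [] => some t
  | var _, _ :: _ => none
  | app _ ts, i :: p => match ts[i]? with
    | some t => subtermAt t p
    | none => none

/-- Replacement of the subterm at a position. -/
def replaceAt : Term F → List ℕ → Term F → Option (Term F)
  | _, [], u => some u
  | var _, _ :: _, _ => none
  | app f ts, i :: p, u => match ts[i]? with
    | some t => match replaceAt t p u with
      | some t' => some (app f (ts.set i t'))
      | none => none
    | none => none

/-- Renaming of variables. -/
def rename (π : ℕ → ℕ) (t : Term F) : Term F := t.subst (fun x => var (π x))

/-- The term is not a variable (i.e. its root is a function symbol). -/
def isFun : Term F → Prop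
  | var _ => False
  | app _ _ => True

end Term

/-- Simultaneous replacement at a list of (parallel) positions. -/
def replaceAll {F : Type} : Term F → List (List ℕ × Term F) → Option (Term F)
  | t, [] => some t
  | t, (p, u) :: rest => match t.replaceAt p u with
    | some t' => replaceAll t' rest
    | none => none

/-- Two positions are parallel if neither is a prefix of the other. -/
def ParallelPos (p q : List ℕ) : Prop := ¬ p <+: q ∧ ¬ q <+: p

/-- Prefix every position in the `i`-th member of `Qs` with `i` and collect the results. -/
def posJoin (Qs : List (List (List ℕ))) : List (List ℕ) :=
  (Qs.zipIdx.map fun iq => iq.1.map (iq.2 :: ·)).flatten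

/-- The domain of a substitution. -/
def Dom {F : Type} (σ : ℕ → Term F) : Set ℕ := {x | σ x ≠ Term.var x}

/-! ### Abstract rewriting notions -/

/-- Confluence of an abstract relation. -/
def Confluent {α : Type*} (r : α → α → Prop) : Prop :=
  ∀ s t u, Relation.ReflTransGen r s t → Relation.ReflTransGen r s u →
    ∃ v, Relation.ReflTransGen r t v ∧ Relation.ReflTransGen r u v

/-- Local confluence of an abstract relation. -/
def LocallyConfluent {α : Type*} (r : α → α → Prop) : Prop :=
  ∀ s t u, r s t → r s u →
    ∃ v, Relation.ReflTransGen r t v ∧ Relation.ReflTransGen r u v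

/-- Composition of relations. -/
def Comp {α : Type*} (r s : α → α → Prop) : α → α → Prop := fun a c => ∃ b, r a b ∧ s b c

/-! ### Constrained rewrite rules and LCTRSs -/

/-- A constrained rewrite rule `ℓ → r [φ]`. -/
structure Rule (F : Type) where
  lhs : Term F
  rhs : Term F
  cond : Term F

/-- The logical variables `LVar(ρ) = Var(φ) ∪ (Var(r) ∖ Var(ℓ))` of a rule. -/
def LVar {F : Type} (ρ : Rule F) : Set ℕ := ρ.cond.vars ∪ (ρ.rhs.vars \ ρ.lhs.vars)

/-- `EVar(ρ) = Var(r) ∖ (Var(ℓ) ∪ Var(φ))`, as a list. -/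
def EVarList {F : Type} (ρ : Rule F) : List ℕ :=
  ρ.rhs.varsList.filter fun x => !(ρ.lhs.varsList.contains x || ρ.cond.varsList.contains x)

/-- All variables of a rule. -/
def ruleVars {F : Type} (ρ : Rule F) : Set ℕ := ρ.lhs.vars ∪ ρ.rhs.vars ∪ ρ.cond.vars

/-- Terms all of whose function symbols are theory symbols (logical terms). -/
inductive IsLogical {F : Type} (Fth : Set F) : Term F → Prop
  | var (x : ℕ) : IsLogical Fth (.var x)
  | app {f ts} : f ∈ Fth → (∀ t ∈ ts, IsLogical Fth t) → IsLogical Fth (.app f ts)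

/-- A logically constrained term rewrite system (data part): a signature split into
term symbols `Fte` and theory symbols `Fth` with value constants `Val`, an arity
function, an interpretation `J` of ground logical terms, distinguished symbols
`tt` (the truth value ⊤), `andS` (conjunction) and `eqS` (equality), and a set
of constrained rewrite rules. -/
structure LCTRS (F : Type) where
  Fte : Set F
  Fth : Set F
  Val : Set F
  arity : F → ℕ
  J : Term F → F
  tt : F
  andS : F
  eqS : F
  rules : Set (Rule F)

namespace LCTRS

variable {F : Type}

/-- The term `t` is a value. -/
def isVal (R : LCTRS F) (t : Term F) : Prop := ∃ v ∈ R.Val, t = Term.app v []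

/-- `γ` assigns values to all variables in `S`. -/
def valAssign (R : LCTRS F) (S : Set ℕ) (γ : ℕ → Term F) : Prop := ∀ x ∈ S, R.isVal (γ x)

/-- A ground term (no variables). -/
def Ground (t : Term F) : Prop := t.varsList = []

/-- Validity of a constraint: `J(φγ) = ⊤` for every assignment of values to its variables. -/
def validC (R : LCTRS F) (φ : Term F) : Prop :=
  ∀ γ, R.valAssign φ.vars γ → R.J (φ.subst γ) = R.tt

/-- Satisfiability of a constraint. -/
def satC (R : LCTRS F) (φ : Term F) : Prop :=
  ∃ γ, R.valAssign φ.vars γ ∧ R.J (φ.subst γ) = R.tt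

/-- `γ ⊨ φ`: the substitution `γ` respects the constraint `φ`. -/
def respectsC (R : LCTRS F) (γ : ℕ → Term F) (φ : Term F) : Prop :=
  R.valAssign φ.vars γ ∧ R.validC (φ.subst γ)

/-- `σ ⊨ ρ`: the substitution `σ` respects the constrained rule `ρ`. -/
def respectsRule (R : LCTRS F) (σ : ℕ → Term F) (ρ : Rule F) : Prop :=
  Dom σ = ρ.lhs.vars ∪ ρ.rhs.vars ∪ ρ.cond.vars ∧
  (∀ x ∈ LVar ρ, R.isVal (σ x)) ∧ R.validC (ρ.cond.subst σ)

/-- Validity of the implication `φ ⇒ ψ`. -/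
def validImp (R : LCTRS F) (φ ψ : Term F) : Prop :=
  ∀ γ, R.valAssign (φ.vars ∪ ψ.vars) γ → R.J (φ.subst γ) = R.tt → R.J (ψ.subst γ) = R.tt

/-- The calculation rule `f(x₁,…,xₙ) → y [y = f(x₁,…,xₙ)]` for a theory symbol `f`. -/
def calcRule (R : LCTRS F) (f : F) : Rule F :=
  let xs : List (Term F) := (List.range (R.arity f)).map Term.var
  ⟨Term.app f xs, Term.var (R.arity f),
    Term.app R.eqS [Term.var (R.arity f), Term.app f xs]⟩

/-- `R_rc`: the rules of `R` together with all calculation rules. -/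
def Rrc (R : LCTRS F) : Set (Rule F) :=
  R.rules ∪ {ρ | ∃ f ∈ R.Fth \ R.Val, ρ = R.calcRule f}

/-- The conjunction `a ∧ b` as a logical term. -/
def conj (R : LCTRS F) (a b : Term F) : Term F := Term.app R.andS [a, b]

/-- The truth constant `⊤` as a logical term. -/
def trueT (R : LCTRS F) : Term F := Term.app R.tt []

/-- Conjunction of a list of constraints. -/
def bigConj (R : LCTRS F) (l : List (Term F)) : Term F := l.foldr R.conj R.trueT

/-- `EC_ρ`: the conjunction of `x = x` for all `x ∈ EVar(ρ)`. -/
def EC (R : LCTRS F) (ρ : Rule F) : Term F :=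
  R.bigConj ((EVarList ρ).map fun x => Term.app R.eqS [Term.var x, Term.var x])

/-- Well-formedness of an LCTRS: the axioms on the signature, values,
interpretation, the distinguished logical symbols, and the rules. -/
def WF (R : LCTRS F) : Prop :=
  R.Val ⊆ R.Fth ∧ R.Fte ∩ R.Fth ⊆ R.Val ∧ (∀ ι ∈ R.Val, R.arity ι = 0) ∧
  (∀ t, R.J t ∈ R.Val) ∧ (∀ v ∈ R.Val, R.J (Term.app v []) = v) ∧
  R.tt ∈ R.Val ∧ R.andS ∈ R.Fth \ R.Val ∧ R.arity R.andS = 2 ∧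
  R.eqS ∈ R.Fth \ R.Val ∧ R.arity R.eqS = 2 ∧
  (∀ a b : Term F, IsLogical R.Fth a → IsLogical R.Fth b → Ground a → Ground b →
    (R.J (R.conj a b) = R.tt ↔ (R.J a = R.tt ∧ R.J b = R.tt))) ∧
  (∀ a b : Term F, IsLogical R.Fth a → IsLogical R.Fth b → Ground a → Ground b →
    (R.J (Term.app R.eqS [a, b]) = R.tt ↔ R.J a = R.J b)) ∧
  (∀ ρ ∈ R.rules, (∃ f ts, ρ.lhs = Term.app f ts ∧ f ∈ R.Fte \ R.Fth) ∧
    IsLogical R.Fth ρ.cond)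

/-! ### Rewriting induced by an LCTRS -/

/-- One rewrite step at position `p`. -/
def rstepAt (R : LCTRS F) (p : List ℕ) (s t : Term F) : Prop :=
  ∃ ρ ∈ R.Rrc, ∃ σ, R.respectsRule σ ρ ∧
    s.subtermAt p = some (ρ.lhs.subst σ) ∧ s.replaceAt p (ρ.rhs.subst σ) = some t

/-- The rewrite relation `→_R`. -/
def rstep (R : LCTRS F) (s t : Term F) : Prop := ∃ p, R.rstepAt p s t

/-- A rewrite step at a position below (or equal to) `q`. -/
def rstepGe (R : LCTRS F) (q : List ℕ) (s t : Term F) : Prop :=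
  ∃ p, q <+: p ∧ R.rstepAt p s t

end LCTRS

/-! ### TRSs (unconstrained term rewrite systems) -/

/-- A TRS is a set of rules, i.e. pairs of terms. -/
abbrev TRS (F : Type) := Set (Term F × Term F)

/-- One rewrite step of a TRS at position `p`. -/
def tstepAt {F : Type} (S : TRS F) (p : List ℕ) (s t : Term F) : Prop :=
  ∃ lr ∈ S, ∃ σ : ℕ → Term F,
    s.subtermAt p = some (lr.1.subst σ) ∧ s.replaceAt p (lr.2.subst σ) = some t

/-- The rewrite relation of a TRS. -/
def tstep {F : Type} (S : TRS F) (s t : Term F) : Prop := ∃ p, tstepAt S p s t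

/-- A TRS is left-linear if no variable occurs twice in a left-hand side. -/
def LeftLinearTRS {F : Type} (S : TRS F) : Prop := ∀ lr ∈ S, ∀ x, lr.1.count x ≤ 1

/-! ### The transformed TRS `R̄` of an LCTRS -/

/-- The TRS `R̄`: all value instances `ℓτ → rτ` of constrained rules, together with
the calculation instances `f(v₁,…,vₙ) → J(f(v₁,…,vₙ))`. -/
def barTRS {F : Type} (R : LCTRS F) : TRS F :=
  {lr | ∃ ρ ∈ R.rules, ∃ τ : ℕ → Term F, Dom τ = LVar ρ ∧
      (∀ x ∈ LVar ρ, R.isVal (τ x)) ∧ R.validC (ρ.cond.subst τ) ∧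
      lr = (ρ.lhs.subst τ, ρ.rhs.subst τ)} ∪
  {lr | ∃ f ∈ R.Fth \ R.Val, ∃ vs : List F, vs.length = R.arity f ∧
      (∀ v ∈ vs, v ∈ R.Val) ∧
      lr = (Term.app f (vs.map fun v => Term.app v []),
            Term.app (R.J (Term.app f (vs.map fun v => Term.app v []))) [])}

/-! ### Generic multi-steps and parallel steps -/

/-- Generic multi-step relation over a set of constrained rules with a side
condition `Cond` on the rule and the matching substitution. -/
inductive MStepG {F : Type} (Rules : Set (Rule F)) (Cond : Rule F → (ℕ → Term F) → Prop) :
    Term F → Term F → Prop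
  | var (x : ℕ) : MStepG Rules Cond (.var x) (.var x)
  | app {f : F} {ss ts : List (Term F)} :
      List.Forall₂ (MStepG Rules Cond) ss ts → MStepG Rules Cond (.app f ss) (.app f ts)
  | rule {ρ : Rule F} {σ τ : ℕ → Term F} :
      ρ ∈ Rules → Cond ρ σ → (∀ x, MStepG Rules Cond (σ x) (τ x)) →
      MStepG Rules Cond (ρ.lhs.subst σ) (ρ.rhs.subst τ)

mutual
/-- Generic parallel rewriting, annotated with the list of (parallel) positions of
the contracted redexes; `Root` is the root-step relation. -/
inductive ParP {F : Type} (Root : Term F → Term F → Prop) :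
    List (List ℕ) → Term F → Term F → Prop
  | var (x : ℕ) : ParP Root [] (.var x) (.var x)
  | app {f : F} {Qs ss ts} : ParPs Root Qs ss ts →
      ParP Root (posJoin Qs) (.app f ss) (.app f ts)
  | rule {s t : Term F} : Root s t → ParP Root [[]] s t

inductive ParPs {F : Type} (Root : Term F → Term F → Prop) :
    List (List (List ℕ)) → List (Term F) → List (Term F) → Prop
  | nil : ParPs Root [] [] []
  | cons {Q s t Qs ss ts} : ParP Root Q s t → ParPs Root Qs ss ts →
      ParPs Root (Q :: Qs) (s :: ss) (t :: ts)
end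

/-- Root steps of a TRS. -/
def trootStep {F : Type} (S : TRS F) (s t : Term F) : Prop :=
  ∃ lr ∈ S, ∃ σ : ℕ → Term F, s = lr.1.subst σ ∧ t = lr.2.subst σ

/-- The parallel rewrite relation `⇉^Q` of a TRS. -/
def tparQ {F : Type} (S : TRS F) (Q : List (List ℕ)) : Term F → Term F → Prop :=
  ParP (trootStep S) Q

/-- The parallel rewrite relation `⇉` of a TRS. -/
def tpar {F : Type} (S : TRS F) (s t : Term F) : Prop := ∃ Q, tparQ S Q s t

/-- The multi-step relation `⊸→` of a TRS. -/
def tmstep {F : Type} (S : TRS F) : Term F → Term F → Prop :=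
  MStepG {ρ : Rule F | (ρ.lhs, ρ.rhs) ∈ S} (fun _ _ => True)

namespace LCTRS

variable {F : Type}

/-- Root steps of an LCTRS (on unconstrained terms). -/
def lrootStep (R : LCTRS F) (s t : Term F) : Prop :=
  ∃ ρ ∈ R.Rrc, ∃ σ, R.respectsRule σ ρ ∧ s = ρ.lhs.subst σ ∧ t = ρ.rhs.subst σ

/-- The parallel rewrite relation `⇉^Q` of an LCTRS on terms. -/
def lparQ (R : LCTRS F) (Q : List (List ℕ)) : Term F → Term F → Prop :=
  ParP R.lrootStep Q

/-- The parallel rewrite relation `⇉` of an LCTRS on terms. -/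
def lpar (R : LCTRS F) (s t : Term F) : Prop := ∃ Q, R.lparQ Q s t

/-- The multi-step relation `⊸→` of an LCTRS on terms. -/
def lmstep (R : LCTRS F) : Term F → Term F → Prop :=
  MStepG R.Rrc (fun ρ σ => R.respectsRule σ ρ)

/-! ### Constrained terms and rewriting on them -/

/-- Side condition for rewriting a constrained term with constraint `φ` using
rule `ρ` and substitution `σ`: `σ(x) ∈ Val ∪ Var(φ)` for logical variables,
`φ` is satisfiable and `φ ⇒ ψσ` is valid. -/
def ccond (R : LCTRS F) (φ : Term F) (ρ : Rule F) (σ : ℕ → Term F) : Prop :=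
  (∀ x ∈ LVar ρ, R.isVal (σ x) ∨ ∃ y ∈ φ.vars, σ x = Term.var y) ∧
  R.satC φ ∧ R.validImp φ (ρ.cond.subst σ)

/-- One step on a constrained term (the constraint `φ` is left unchanged) at position `p`. -/
def cstepAt (R : LCTRS F) (φ : Term F) (p : List ℕ) (s t : Term F) : Prop :=
  ∃ ρ ∈ R.Rrc, ∃ σ, R.ccond φ ρ σ ∧
    s.subtermAt p = some (ρ.lhs.subst σ) ∧ s.replaceAt p (ρ.rhs.subst σ) = some t

/-- A step on a constrained term at a position below (or equal to) `q`. -/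
def cstepGe (R : LCTRS F) (φ : Term F) (q : List ℕ) (s t : Term F) : Prop :=
  ∃ p, q <+: p ∧ R.cstepAt φ p s t

/-- Root steps on constrained terms with constraint `φ`. -/
def crootStep (R : LCTRS F) (φ : Term F) (s t : Term F) : Prop :=
  ∃ ρ ∈ R.Rrc, ∃ σ, R.ccond φ ρ σ ∧ s = ρ.lhs.subst σ ∧ t = ρ.rhs.subst σ

/-- The parallel relation `⇉^Q` on constrained terms (constraint unchanged). -/
def cparQ (R : LCTRS F) (φ : Term F) (Q : List (List ℕ)) : Term F → Term F → Prop :=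
  ParP (R.crootStep φ) Q

/-- The multi-step relation `⊸→` on constrained terms (constraint unchanged). -/
def cmstep (R : LCTRS F) (φ : Term F) : Term F → Term F → Prop :=
  MStepG R.Rrc (R.ccond φ)

/-- Equivalence `∼` of constrained terms (domains restricted to the constraint variables). -/
def simTerm (R : LCTRS F) (s φ t ψ : Term F) : Prop :=
  (∀ γ, R.respectsC γ φ → Dom γ = φ.vars →
    ∃ δ, R.respectsC δ ψ ∧ Dom δ = ψ.vars ∧ s.subst γ = t.subst δ) ∧
  (∀ δ, R.respectsC δ ψ → Dom δ = ψ.vars →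
    ∃ γ, R.respectsC γ φ ∧ Dom γ = φ.vars ∧ s.subst γ = t.subst δ)

/-- The equivalence `∼′` of constrained terms (unrestricted domains). -/
def simTerm' (R : LCTRS F) (s φ t ψ : Term F) : Prop :=
  (∀ γ, R.respectsC γ φ → ∃ δ, R.respectsC δ ψ ∧ s.subst γ = t.subst δ) ∧
  (∀ δ, R.respectsC δ ψ → ∃ γ, R.respectsC γ φ ∧ s.subst γ = t.subst δ)

end LCTRS

/-- A constrained pair `s ≈ t [φ]` (the constrained term with binary root `≈`). -/
abbrev CPair (F : Type) := Term F × Term F × Term F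

namespace LCTRS

variable {F : Type}

/-- Equivalence `∼` on constrained pairs `s ≈ t [φ]`. -/
def simPair (R : LCTRS F) (a b : CPair F) : Prop :=
  (∀ γ, R.respectsC γ a.2.2 → Dom γ = a.2.2.vars →
    ∃ δ, R.respectsC δ b.2.2 ∧ Dom δ = b.2.2.vars ∧
      a.1.subst γ = b.1.subst δ ∧ a.2.1.subst γ = b.2.1.subst δ) ∧
  (∀ δ, R.respectsC δ b.2.2 → Dom δ = b.2.2.vars →
    ∃ γ, R.respectsC γ a.2.2 ∧ Dom γ = a.2.2.vars ∧
      a.1.subst γ = b.1.subst δ ∧ a.2.1.subst γ = b.2.1.subst δ)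

/-- A raw rewrite step on the pair inside the first component, below position `1·q`. -/
def rawStepFstGe (R : LCTRS F) (q : List ℕ) (a b : CPair F) : Prop :=
  b.2.2 = a.2.2 ∧ b.2.1 = a.2.1 ∧ R.cstepGe a.2.2 q a.1 b.1

/-- A raw rewrite step on the pair inside the second component, below position `2·q`. -/
def rawStepSndGe (R : LCTRS F) (q : List ℕ) (a b : CPair F) : Prop :=
  b.2.2 = a.2.2 ∧ b.1 = a.1 ∧ R.cstepGe a.2.2 q a.2.1 b.2.1

/-- `~→_{≥1q}` on constrained pairs (`∼ · → · ∼`, step in the first component). -/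
def sstepFstGe (R : LCTRS F) (q : List ℕ) : CPair F → CPair F → Prop :=
  Comp R.simPair (Comp (R.rawStepFstGe q) R.simPair)

/-- `~→_{≥2q}` on constrained pairs (`∼ · → · ∼`, step in the second component). -/
def sstepSndGe (R : LCTRS F) (q : List ℕ) : CPair F → CPair F → Prop :=
  Comp R.simPair (Comp (R.rawStepSndGe q) R.simPair)

/-- A raw multi-step on the pair inside the first component. -/
def rawMStepFst (R : LCTRS F) (a b : CPair F) : Prop :=
  b.2.2 = a.2.2 ∧ b.2.1 = a.2.1 ∧ R.cmstep a.2.2 a.1 b.1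

/-- `~⊸→_{≥1}` on constrained pairs. -/
def smstepFst (R : LCTRS F) : CPair F → CPair F → Prop :=
  Comp R.simPair (Comp R.rawMStepFst R.simPair)

/-- A raw parallel step `⇉^P` on the pair inside the first component. -/
def rawParFst (R : LCTRS F) (P : List (List ℕ)) (a b : CPair F) : Prop :=
  b.2.2 = a.2.2 ∧ b.2.1 = a.2.1 ∧ R.cparQ a.2.2 P a.1 b.1

/-- A raw parallel step `⇉^Q` on the pair inside the second component. -/
def rawParSnd (R : LCTRS F) (Q : List (List ℕ)) (a b : CPair F) : Prop :=
  b.2.2 = a.2.2 ∧ b.1 = a.1 ∧ R.cparQ a.2.2 Q a.2.1 b.2.1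

/-- `~⇉_{≥1}^P` on constrained pairs. -/
def sparFst (R : LCTRS F) (P : List (List ℕ)) : CPair F → CPair F → Prop :=
  Comp R.simPair (Comp (R.rawParFst P) R.simPair)

/-- `~⇉_{≥2}^Q` on constrained pairs. -/
def sparSnd (R : LCTRS F) (Q : List (List ℕ)) : CPair F → CPair F → Prop :=
  Comp R.simPair (Comp (R.rawParSnd Q) R.simPair)

/-- A constrained pair `u ≈ v [ψ]` is trivial if `uσ = vσ` for every `σ ⊨ ψ`. -/
def TrivialC (R : LCTRS F) (u v ψ : Term F) : Prop :=
  ∀ σ, R.respectsC σ ψ → u.subst σ = v.subst σ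

end LCTRS

/-! ### Unification, variants, critical pairs -/

/-- `σ` unifies `s` and `t`. -/
def Unifies {F : Type} (σ : ℕ → Term F) (s t : Term F) : Prop := s.subst σ = t.subst σ

/-- `σ` is a most general unifier of `s` and `t`. -/
def IsMGU {F : Type} (σ : ℕ → Term F) (s t : Term F) : Prop :=
  Unifies σ s t ∧ ∀ θ, Unifies θ s t → ∃ δ, ∀ x, (σ x).subst δ = θ x

/-- `(ℓ₂, r₂)` is a variant (bijective renaming) of `(ℓ₁, r₁)`. -/
def IsVariantP {F : Type} (a b : Term F × Term F) : Prop :=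
  ∃ π : ℕ ≃ ℕ, b.1 = a.1.rename π ∧ b.2 = a.2.rename π

/-- `ρ₂` is a variant (bijective renaming) of the constrained rule `ρ₁`. -/
def IsVariantR {F : Type} (a b : Rule F) : Prop :=
  ∃ π : ℕ ≃ ℕ, b.lhs = a.lhs.rename π ∧ b.rhs = a.rhs.rename π ∧ b.cond = a.cond.rename π

/-- `s ≈ t` is a critical pair of the TRS `S` obtained from an overlap at position `p`. -/
def IsCPAt {F : Type} (S : TRS F) (p : List ℕ) (s t : Term F) : Prop :=
  ∃ (l₁ r₁ l₂ r₂ : Term F) (σ : ℕ → Term F) (l2p : Term F),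
    (∃ lr ∈ S, IsVariantP lr (l₁, r₁)) ∧
    (∃ lr ∈ S, IsVariantP lr (l₂, r₂)) ∧
    (l₁.vars ∪ r₁.vars) ∩ (l₂.vars ∪ r₂.vars) = ∅ ∧
    l₂.subtermAt p = some l2p ∧ l2p.isFun ∧
    IsMGU σ l₁ l2p ∧
    (p = [] → ¬ IsVariantP (l₁, r₁) (l₂, r₂)) ∧
    (l₂.subst σ).replaceAt p (r₁.subst σ) = some s ∧
    t = r₂.subst σ

/-- `s ≈ t [φc]` is a constrained critical pair of the LCTRS `R` obtained from an
overlap at position `p`. -/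
def IsCCPAt {F : Type} (R : LCTRS F) (p : List ℕ) (s t φc : Term F) : Prop :=
  ∃ (ρ₁ ρ₂ : Rule F) (σ : ℕ → Term F) (l2p : Term F),
    (∃ ρ ∈ R.Rrc, IsVariantR ρ ρ₁) ∧
    (∃ ρ ∈ R.Rrc, IsVariantR ρ ρ₂) ∧
    ruleVars ρ₁ ∩ ruleVars ρ₂ = ∅ ∧
    ρ₂.lhs.subtermAt p = some l2p ∧ l2p.isFun ∧
    IsMGU σ ρ₁.lhs l2p ∧
    (∀ x ∈ LVar ρ₁ ∪ LVar ρ₂, R.isVal (σ x) ∨ ∃ y, σ x = Term.var y) ∧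
    R.satC (R.conj (ρ₁.cond.subst σ) (ρ₂.cond.subst σ)) ∧
    (p = [] → ¬ IsVariantR ρ₁ ρ₂ ∨ ¬ (ρ₁.rhs.vars ⊆ ρ₁.lhs.vars)) ∧
    (ρ₂.lhs.subst σ).replaceAt p (ρ₁.rhs.subst σ) = some s ∧
    t = ρ₂.rhs.subst σ ∧
    φc = R.conj (ρ₁.cond.subst σ)
           (R.conj (ρ₂.cond.subst σ) ((R.conj (R.EC ρ₁) (R.EC ρ₂)).subst σ))

/-- `s ≈ t` is a parallel critical pair of the TRS `S`: `Ps` is the list of parallel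
overlap positions and `lsig` is the instantiated left-hand side `ℓσ`. -/
def IsPCP {F : Type} (S : TRS F) (Ps : List (List ℕ)) (lsig s t : Term F) : Prop :=
  ∃ (l r : Term F) (prs : List (List ℕ × Term F × Term F)) (σ : ℕ → Term F),
    Ps = prs.map (·.1) ∧ Ps ≠ [] ∧ Ps.Pairwise ParallelPos ∧
    (∃ lr ∈ S, IsVariantP lr (l, r)) ∧
    (∀ pr ∈ prs, ∃ lr ∈ S, IsVariantP lr pr.2) ∧
    prs.Pairwise (fun a b =>
      (a.2.1.vars ∪ a.2.2.vars) ∩ (b.2.1.vars ∪ b.2.2.vars) = ∅) ∧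
    (∀ pr ∈ prs, (l.vars ∪ r.vars) ∩ (pr.2.1.vars ∪ pr.2.2.vars) = ∅) ∧
    (∀ pr ∈ prs, ∃ u, l.subtermAt pr.1 = some u ∧ u.isFun) ∧
    (∀ pr ∈ prs, ∀ u, l.subtermAt pr.1 = some u → Unifies σ pr.2.1 u) ∧
    (∀ θ : ℕ → Term F, (∀ pr ∈ prs, ∀ u, l.subtermAt pr.1 = some u → Unifies θ pr.2.1 u) →
      ∃ δ, ∀ x, (σ x).subst δ = θ x) ∧
    (∀ lp rp, prs = [([], lp, rp)] → ¬ IsVariantP (lp, rp) (l, r)) ∧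
    lsig = l.subst σ ∧
    replaceAll lsig (prs.map fun pr => (pr.1, pr.2.2.subst σ)) = some s ∧
    t = r.subst σ

/-- `s ≈ t [Φ]` is a constrained parallel critical pair of the LCTRS `R`: `Ps` is the
list of parallel overlap positions and `lsig` is the instantiated left-hand side `ℓσ`. -/
def IsCPCP {F : Type} (R : LCTRS F) (Ps : List (List ℕ)) (lsig s t Φ : Term F) : Prop :=
  ∃ (ρ : Rule F) (prs : List (List ℕ × Rule F)) (σ : ℕ → Term F),
    Ps = prs.map (·.1) ∧ Ps ≠ [] ∧ Ps.Pairwise ParallelPos ∧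
    (∃ ρ' ∈ R.Rrc, IsVariantR ρ' ρ) ∧
    (∀ pr ∈ prs, ∃ ρ' ∈ R.Rrc, IsVariantR ρ' pr.2) ∧
    prs.Pairwise (fun a b => ruleVars a.2 ∩ ruleVars b.2 = ∅) ∧
    (∀ pr ∈ prs, ruleVars ρ ∩ ruleVars pr.2 = ∅) ∧
    (∀ pr ∈ prs, ∃ u, ρ.lhs.subtermAt pr.1 = some u ∧ u.isFun) ∧
    (∀ pr ∈ prs, ∀ u, ρ.lhs.subtermAt pr.1 = some u → Unifies σ pr.2.lhs u) ∧
    (∀ θ : ℕ → Term F,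
      (∀ pr ∈ prs, ∀ u, ρ.lhs.subtermAt pr.1 = some u → Unifies θ pr.2.lhs u) →
      ∃ δ, ∀ x, (σ x).subst δ = θ x) ∧
    (∀ x, (x ∈ LVar ρ ∨ ∃ pr ∈ prs, x ∈ LVar pr.2) →
      R.isVal (σ x) ∨ ∃ y, σ x = Term.var y) ∧
    R.satC (R.conj (ρ.cond.subst σ) (R.bigConj (prs.map fun pr => pr.2.cond.subst σ))) ∧
    (∀ ρε, prs = [([], ρε)] → ¬ IsVariantR ρε ρ ∨ ¬ (ρ.rhs.vars ⊆ ρ.lhs.vars)) ∧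
    lsig = ρ.lhs.subst σ ∧
    replaceAll lsig (prs.map fun pr => (pr.1, pr.2.rhs.subst σ)) = some s ∧
    t = ρ.rhs.subst σ ∧
    Φ = R.conj (ρ.cond.subst σ)
          (R.conj ((R.conj (R.EC ρ) (R.bigConj (prs.map fun pr => R.EC pr.2))).subst σ)
            (R.bigConj (prs.map fun pr => pr.2.cond.subst σ)))

/-- `Var(t, P)`: the variables occurring in subterms of `t` at positions in `P`. -/
def VarsBelow {F : Type} (t : Term F) (P : List (List ℕ)) : Set ℕ :=
  {x | ∃ p ∈ P, ∃ u, t.subtermAt p = some u ∧ x ∈ u.vars}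

/-- `TVar(t, φ, P)`: the non-logical variables (w.r.t. `φ`) in subterms of `t` at
positions in `P`. -/
def TVarsBelow {F : Type} (t φ : Term F) (P : List (List ℕ)) : Set ℕ :=
  {x | ∃ p ∈ P, ∃ u, t.subtermAt p = some u ∧ x ∈ u.vars ∧ x ∉ φ.vars}

/-! ### Closedness conditions -/

namespace LCTRS

variable {F : Type}

/-- A constrained critical pair `s ≈ t [φ]` is development closed. -/
def DevClosedC (R : LCTRS F) (s t φ : Term F) : Prop :=
  ∃ u v ψ, R.smstepFst (s, t, φ) (u, v, ψ) ∧ R.TrivialC u v ψ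

/-- A constrained critical pair (from an overlap at position `p`) is almost
development closed. -/
def AlmostDevClosedC (R : LCTRS F) (p : List ℕ) (s t φ : Term F) : Prop :=
  (p ≠ [] → R.DevClosedC s t φ) ∧
  (p = [] → ∃ a u v ψ, R.smstepFst (s, t, φ) a ∧
    Relation.ReflTransGen (R.sstepSndGe []) a (u, v, ψ) ∧ R.TrivialC u v ψ)

/-- An LCTRS is almost development closed. -/
def AlmostDevClosedLCTRS (R : LCTRS F) : Prop :=
  ∀ p s t φ, IsCCPAt R p s t φ → R.AlmostDevClosedC p s t φ

/-- A constrained critical pair `s ≈ t [φ]` is 1-parallel closed. -/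
def OnePCc (R : LCTRS F) (s t φ : Term F) : Prop :=
  ∃ P a u v ψ, R.sparFst P (s, t, φ) a ∧
    Relation.ReflTransGen (R.sstepSndGe []) a (u, v, ψ) ∧ R.TrivialC u v ψ

/-- A constrained parallel critical pair is 2-parallel closed. -/
def TwoPCc (R : LCTRS F) (Ps : List (List ℕ)) (lsig s t Φ : Term F) : Prop :=
  ∃ Q a u v ψ, R.sparSnd Q (s, t, Φ) a ∧
    Relation.ReflTransGen (R.sstepFstGe []) a (u, v, ψ) ∧ R.TrivialC u v ψ ∧
    TVarsBelow v ψ Q ⊆ TVarsBelow lsig Φ Ps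

/-- An LCTRS is parallel closed. -/
def ParallelClosedLCTRS (R : LCTRS F) : Prop :=
  (∀ p s t φ, IsCCPAt R p s t φ → R.OnePCc s t φ) ∧
  (∀ Ps lsig s t Φ, IsCPCP R Ps lsig s t Φ → R.TwoPCc Ps lsig s t Φ)

/-- Linearity of the left-hand sides in the non-logical variables (this is all that
is needed for left-linearity of the transformed TRS). -/
def LeftLinearOutsideLVar (R : LCTRS F) : Prop :=
  ∀ ρ ∈ R.rules, ∀ x, x ∉ LVar ρ → ρ.lhs.count x ≤ 1

end LCTRS

/-- A TRS is almost development closed. -/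
def AlmostDevClosedTRS {F : Type} (S : TRS F) : Prop :=
  ∀ p s t, IsCPAt S p s t →
    (p ≠ [] → tmstep S s t) ∧
    (p = [] → ∃ w, tmstep S s w ∧ Relation.ReflTransGen (tstep S) t w)

/-- A TRS is 1-parallel closed. -/
def OnePCTRS {F : Type} (S : TRS F) : Prop :=
  ∀ p s t, IsCPAt S p s t → ∃ w, tpar S s w ∧ Relation.ReflTransGen (tstep S) t w

/-- A TRS is 2-parallel closed. -/
def TwoPCTRS {F : Type} (S : TRS F) : Prop :=
  ∀ Ps lsig s t, IsPCP S Ps lsig s t →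
    ∃ v Q, Relation.ReflTransGen (tstep S) s v ∧ tparQ S Q t v ∧
      VarsBelow v Q ⊆ VarsBelow lsig Ps

/-- A TRS is parallel closed. -/
def ParallelClosedTRS {F : Type} (S : TRS F) : Prop := OnePCTRS S ∧ TwoPCTRS S


namespace Term
variable {F : Type}

@[simp] theorem subst_var (σ : ℕ → Term F) (x : ℕ) : (var x).subst σ = σ x := by simp [subst]

@[simp] theorem subst_app (σ : ℕ → Term F) (f : F) (ts : List (Term F)) :
    (app f ts).subst σ = app f (ts.map (subst σ)) := by
  simp [subst, List.map_attach_eq_pmap]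

@[simp] theorem varsList_var (x : ℕ) : (var x : Term F).varsList = [x] := by simp [varsList]

@[simp] theorem varsList_app (f : F) (ts : List (Term F)) :
    (app f ts).varsList = (ts.map varsList).flatten := by
  simp [varsList, List.map_attach_eq_pmap]

theorem induct {P : Term F → Prop} (hv : ∀ x, P (var x))
    (ha : ∀ f ts, (∀ t ∈ ts, P t) → P (app f ts)) : ∀ t, P t
  | var x => hv x
  | app f ts => ha f ts (fun t ht => induct hv ha t)
decreasing_by
  have := List.sizeOf_lt_of_mem ht
  simp only [Term.app.sizeOf_spec]
  omega

end Term

namespace Term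
variable {F : Type}

theorem mem_varsList_app {x : ℕ} {f : F} {ts : List (Term F)} :
    x ∈ (app f ts).varsList ↔ ∃ t ∈ ts, x ∈ t.varsList := by
  simp [List.mem_flatten]

theorem subst_subst (σ δ : ℕ → Term F) (t : Term F) :
    (t.subst σ).subst δ = t.subst (fun x => (σ x).subst δ) := by
  induction t using induct with
  | hv x => simp
  | ha f ts ih =>
    simp only [subst_app, List.map_map]
    exact congrArg _ (List.map_congr_left (fun t ht => ih t ht))

theorem subst_congr {σ δ : ℕ → Term F} {t : Term F}
    (h : ∀ x ∈ t.varsList, σ x = δ x) : t.subst σ = t.subst δ := by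
  induction t using induct with
  | hv x => simpa using h x (by simp)
  | ha f ts ih =>
    simp only [subst_app]
    exact congrArg _ (List.map_congr_left fun t ht =>
      ih t ht (fun x hx => h x (mem_varsList_app.2 ⟨t, ht, hx⟩)))

@[simp] theorem subst_id (t : Term F) : t.subst var = t := by
  induction t using induct with
  | hv x => simp
  | ha f ts ih =>
    simp only [subst_app]
    exact congrArg _ (by rw [List.map_congr_left ih]; exact List.map_id ts)

theorem mem_varsList_subst {x : ℕ} {σ : ℕ → Term F} {t : Term F} :
    x ∈ (t.subst σ).varsList ↔ ∃ y ∈ t.varsList, x ∈ (σ y).varsList := by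
  induction t using induct with
  | hv y => simp
  | ha f ts ih =>
    simp only [subst_app, mem_varsList_app, List.mem_map]
    constructor
    · rintro ⟨-, ⟨t, ht, rfl⟩, hx⟩
      obtain ⟨y, hy, hxy⟩ := (ih t ht).1 hx
      exact ⟨y, ⟨t, ht, hy⟩, hxy⟩
    · rintro ⟨y, ⟨t, ht, hyt⟩, hxy⟩
      exact ⟨_, ⟨t, ht, rfl⟩, (ih t ht).2 ⟨y, hyt, hxy⟩⟩

theorem eqOn_vars_of_subst_eq {a b : ℕ → Term F} {t : Term F}
    (h : t.subst a = t.subst b) : ∀ x ∈ t.varsList, a x = b x := by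
  induction t using induct with
  | hv y => intro x hx; simp at hx; subst hx; simpa using h
  | ha f ts ih =>
    intro x hx
    obtain ⟨t, ht, hxt⟩ := mem_varsList_app.1 hx
    simp only [subst_app, app.injEq] at h
    have := (List.map_inj_left).1 h.2 t ht
    exact ih t ht this x hxt

theorem subst_eq_self_of_vars {σ : ℕ → Term F} {t : Term F}
    (h : ∀ x ∈ t.varsList, σ x = var x) : t.subst σ = t := by
  rw [subst_congr h, subst_id]

theorem rename_subst (π : ℕ → ℕ) (σ : ℕ → Term F) (t : Term F) :
    (t.rename π).subst σ = t.subst (fun x => σ (π x)) := by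
  rw [rename, subst_subst]; simp

theorem mem_varsList_rename {x : ℕ} {π : ℕ → ℕ} {t : Term F} :
    x ∈ (t.rename π).varsList ↔ ∃ y ∈ t.varsList, x = π y := by
  rw [rename]; simp [mem_varsList_subst]

end Term

namespace Term
variable {F : Type}

/-- Size of a term. -/
def size : Term F → ℕ
  | var _ => 1
  | app _ ts => 1 + (ts.attach.map fun ⟨t, _⟩ => size t).sum

@[simp] theorem size_var (x : ℕ) : (var x : Term F).size = 1 := by simp [size]

@[simp] theorem size_app (f : F) (ts : List (Term F)) :
    (app f ts).size = 1 + (ts.map size).sum := by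
  simp [size, List.map_attach_eq_pmap]

theorem size_le_subst {x : ℕ} {t : Term F} (σ : ℕ → Term F) (h : x ∈ t.varsList) :
    (σ x).size ≤ (t.subst σ).size := by
  induction t using induct with
  | hv y => simp at h; subst h; simp
  | ha f ts ih =>
    obtain ⟨t, ht, hxt⟩ := mem_varsList_app.1 h
    calc (σ x).size ≤ (t.subst σ).size := ih t ht hxt
    _ ≤ ((ts.map (subst σ)).map size).sum :=
        List.le_sum_of_mem (List.mem_map.2 ⟨t.subst σ, List.mem_map.2 ⟨t, ht, rfl⟩, rfl⟩)
    _ ≤ ((app f ts).subst σ).size := by simp only [subst_app, size_app]; omega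

theorem size_lt_subst {x : ℕ} {f : F} {ts : List (Term F)} (σ : ℕ → Term F)
    (h : x ∈ (app f ts).varsList) : (σ x).size < ((app f ts).subst σ).size := by
  obtain ⟨t, ht, hxt⟩ := mem_varsList_app.1 h
  have h1 : (σ x).size ≤ (t.subst σ).size := size_le_subst σ hxt
  have h2 : (t.subst σ).size ≤ ((ts.map (subst σ)).map size).sum :=
    List.le_sum_of_mem (List.mem_map.2 ⟨t.subst σ, List.mem_map.2 ⟨t, ht, rfl⟩, rfl⟩)
  simp only [subst_app, size_app]
  omega

@[simp] theorem subtermAt_nil (t : Term F) : t.subtermAt [] = some t := by simp [subtermAt]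

@[simp] theorem replaceAt_nil (t u : Term F) : t.replaceAt [] u = some u := by simp [replaceAt]

theorem subtermAt_subst {σ : ℕ → Term F} :
    ∀ {p : List ℕ} {t u : Term F}, t.subtermAt p = some u →
      (t.subst σ).subtermAt p = some (u.subst σ) := by
  intro p
  induction p with
  | nil => intro t u h; simp at h; subst h; simp
  | cons i p ih =>
    intro t u h
    match t with
    | var x => simp [subtermAt] at h
    | app f ts =>
      simp only [subtermAt] at h
      match hts : ts[i]? with
      | none => rw [hts] at h; simp at h
      | some t' =>
        rw [hts] at h
        simp only [subst_app, subtermAt, List.getElem?_map, hts, Option.map_some]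
        exact ih h

theorem replaceAt_subst {σ : ℕ → Term F} :
    ∀ {p : List ℕ} {t u v : Term F}, t.replaceAt p u = some v →
      (t.subst σ).replaceAt p (u.subst σ) = some (v.subst σ) := by
  intro p
  induction p with
  | nil => intro t u v h; simp at h; subst h; simp
  | cons i p ih =>
    intro t u v h
    match t with
    | var x => simp [replaceAt] at h
    | app f ts =>
      simp only [replaceAt] at h
      match hts : ts[i]? with
      | none => simp only [hts] at h; exact absurd h (by simp)
      | some t' =>
        simp only [hts] at h
        match ht' : t'.replaceAt p u with
        | none => simp only [ht'] at h; exact absurd h (by simp)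
        | some t'' =>
          simp only [ht'] at h
          simp only [Option.some.injEq] at h
          subst h
          simp only [subst_app, replaceAt, List.getElem?_map, hts, Option.map_some, ih ht',
            Option.some.injEq, app.injEq, true_and]
          rw [List.map_set]

theorem replaceAt_isSome :
    ∀ {p : List ℕ} {t u : Term F}, t.subtermAt p = some u →
      ∀ w, ∃ v, t.replaceAt p w = some v := by
  intro p
  induction p with
  | nil => intro t u h w; exact ⟨w, by simp⟩
  | cons i p ih =>
    intro t u h w
    match t with
    | var x => simp [subtermAt] at h
    | app f ts =>
      simp only [subtermAt] at h
      match hts : ts[i]? with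
      | none => rw [hts] at h; simp at h
      | some t' =>
        rw [hts] at h
        obtain ⟨v, hv⟩ := ih h w
        exact ⟨app f (ts.set i v), by simp only [replaceAt, hts, hv]⟩

end Term

theorem IsLogical.subst {F : Type} {Fth : Set F} {t : Term F} {σ : ℕ → Term F}
    (h : IsLogical Fth t) (hσ : ∀ x ∈ t.varsList, IsLogical Fth (σ x)) :
    IsLogical Fth (t.subst σ) := by
  induction h with
  | var x => rw [Term.subst_var]; exact hσ x (by simp)
  | @app f ts hf hts ih =>
    rw [Term.subst_app]
    exact IsLogical.app hf (by
      intro u hu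
      obtain ⟨t', ht', rfl⟩ := List.mem_map.1 hu
      exact ih t' ht' (fun x hx => hσ x (Term.mem_varsList_app.2 ⟨t', ht', hx⟩)))


namespace Unif
open Term
variable {F : Type}

/-- The substitution replacing the single variable `x` by `t`. -/
def sub1 (x : ℕ) (t : Term F) : ℕ → Term F := fun y => if y = x then t else Term.var y

@[simp] theorem sub1_same (x : ℕ) (t : Term F) : sub1 x t x = t := by simp [sub1]

theorem sub1_other {x y : ℕ} (t : Term F) (h : y ≠ x) : sub1 x t y = Term.var y := by
  simp [sub1, h]

def pvarsL (P : List (Term F × Term F)) : List ℕ :=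
  (P.map fun pr => pr.1.varsList ++ pr.2.varsList).flatten

def nv (P : List (Term F × Term F)) : ℕ := (pvarsL P).toFinset.card

def sz (P : List (Term F × Term F)) : ℕ := (P.map fun pr => pr.1.size + pr.2.size).sum

def applyP (σ : ℕ → Term F) (P : List (Term F × Term F)) : List (Term F × Term F) :=
  P.map fun pr => (pr.1.subst σ, pr.2.subst σ)

theorem mem_pvarsL {y : ℕ} {P : List (Term F × Term F)} :
    y ∈ pvarsL P ↔ ∃ pr ∈ P, y ∈ pr.1.varsList ∨ y ∈ pr.2.varsList := by
  simp [pvarsL, List.mem_flatten]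

theorem pvars_applyP_subset {x : ℕ} {t : Term F} (hx : x ∉ t.varsList)
    {P : List (Term F × Term F)} :
    ∀ y ∈ pvarsL (applyP (sub1 x t) P), (y ∈ pvarsL P ∨ y ∈ t.varsList) ∧ y ≠ x := by
  intro y hy
  rw [mem_pvarsL] at hy
  obtain ⟨pr, hpr, hcase⟩ := hy
  obtain ⟨pr0, hpr0, rfl⟩ := List.mem_map.1 hpr
  have key : ∀ u : Term F, (u ∈ [pr0.1, pr0.2]) → y ∈ (u.subst (sub1 x t)).varsList →
      (y ∈ pvarsL P ∨ y ∈ t.varsList) ∧ y ≠ x := by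
    intro u hu hmem
    obtain ⟨z, hz, hyz⟩ := mem_varsList_subst.1 hmem
    by_cases hzx : z = x
    · subst hzx
      rw [sub1_same] at hyz
      exact ⟨Or.inr hyz, by rintro rfl; exact hx hyz⟩
    · rw [sub1_other _ hzx] at hyz
      simp at hyz; subst hyz
      refine ⟨Or.inl (mem_pvarsL.2 ⟨pr0, hpr0, ?_⟩), hzx⟩
      simp at hu
      rcases hu with rfl | rfl
      · exact Or.inl hz
      · exact Or.inr hz
  rcases hcase with h | h
  · exact key pr0.1 (by simp) h
  · exact key pr0.2 (by simp) h

@[simp] theorem pvarsL_cons (pr : Term F × Term F) (P : List (Term F × Term F)) :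
    pvarsL (pr :: P) = pr.1.varsList ++ pr.2.varsList ++ pvarsL P := by
  simp [pvarsL]

@[simp] theorem pvarsL_append (P Q : List (Term F × Term F)) :
    pvarsL (P ++ Q) = pvarsL P ++ pvarsL Q := by
  simp [pvarsL]

@[simp] theorem sz_cons (pr : Term F × Term F) (P : List (Term F × Term F)) :
    sz (pr :: P) = pr.1.size + pr.2.size + sz P := by simp [sz]

@[simp] theorem sz_append (P Q : List (Term F × Term F)) :
    sz (P ++ Q) = sz P + sz Q := by simp [sz]

theorem nv_le_of_subset {P Q : List (Term F × Term F)}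
    (h : ∀ y ∈ pvarsL Q, y ∈ pvarsL P) : nv Q ≤ nv P :=
  Finset.card_le_card (fun y hy => List.mem_toFinset.2 (h y (List.mem_toFinset.1 hy)))

theorem nv_lt_of {x : ℕ} {t : Term F} {P0 rest : List (Term F × Term F)}
    (hx : x ∉ t.varsList) (hmem : x ∈ pvarsL P0)
    (hsub : ∀ y, (y ∈ pvarsL rest ∨ y ∈ t.varsList) → y ∈ pvarsL P0) :
    nv (applyP (sub1 x t) rest) < nv P0 := by
  apply Finset.card_lt_card
  constructor
  · intro y hy
    rw [List.mem_toFinset] at *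
    exact hsub y (pvars_applyP_subset hx y hy).1
  · intro hcon
    have := hcon (List.mem_toFinset.2 hmem)
    rw [List.mem_toFinset] at this
    exact (pvars_applyP_subset hx x this).2 rfl

theorem sz_zip_le : ∀ (ss ts : List (Term F)),
    sz (ss.zip ts) ≤ (ss.map Term.size).sum + (ts.map Term.size).sum := by
  intro ss
  induction ss with
  | nil => intro ts; simp [sz]
  | cons a ss ih =>
    intro ts
    cases ts with
    | nil => simp [sz]
    | cons b ts =>
      have := ih ts
      simp only [List.zip_cons_cons, sz_cons, List.map_cons, List.sum_cons]
      omega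

open Classical in
noncomputable def unify : List (Term F × Term F) → Option (ℕ → Term F)
  | [] => some Term.var
  | (Term.var x, t) :: rest =>
    if heq : t = Term.var x then unify rest
    else if hocc : x ∈ t.varsList then none
    else (unify (applyP (sub1 x t) rest)).map fun μ => fun y => ((sub1 x t) y).subst μ
  | (Term.app f ss, Term.var x) :: rest =>
    if hocc : x ∈ (Term.app f ss).varsList then none
    else (unify (applyP (sub1 x (Term.app f ss)) rest)).map
      fun μ => fun y => ((sub1 x (Term.app f ss)) y).subst μ
  | (Term.app f ss, Term.app g ts) :: rest =>
    if hd : f = g ∧ ss.length = ts.length then unify (ss.zip ts ++ rest) else none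
termination_by P => (nv P, sz P)
decreasing_by
  · -- delete case
    subst heq
    have h1 : nv rest ≤ nv ((Term.var x, Term.var x) :: rest) :=
      nv_le_of_subset (by intro y hy; simp [hy])
    rcases lt_or_eq_of_le h1 with h | h
    · exact Prod.Lex.left _ _ h
    · rw [h]; apply Prod.Lex.right
      simp only [sz_cons, size_var]; omega
  · -- var elim
    apply Prod.Lex.left
    refine nv_lt_of hocc (by simp) ?_
    intro y hy
    simp only [pvarsL_cons, List.mem_append, varsList_var, List.mem_singleton] at hy ⊢
    tauto
  · -- app-var elim
    apply Prod.Lex.left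
    refine nv_lt_of hocc (by simp) ?_
    intro y hy
    simp only [pvarsL_cons, List.mem_append, varsList_var, List.mem_singleton] at hy ⊢
    tauto
  · -- decomposition
    have h1 : nv (ss.zip ts ++ rest) ≤ nv ((Term.app f ss, Term.app g ts) :: rest) := by
      apply nv_le_of_subset
      intro y hy
      simp only [pvarsL_append, List.mem_append, mem_pvarsL] at hy
      rw [mem_pvarsL]
      rcases hy with hy | hy
      · obtain ⟨pr, hpr, hc⟩ := hy
        have hm := List.of_mem_zip hpr
        refine ⟨(Term.app f ss, Term.app g ts), by simp, ?_⟩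
        rcases hc with hc | hc
        · exact Or.inl (mem_varsList_app.2 ⟨pr.1, hm.1, hc⟩)
        · exact Or.inr (mem_varsList_app.2 ⟨pr.2, hm.2, hc⟩)
      · obtain ⟨pr, hpr, hc⟩ := hy
        exact ⟨pr, by simp [hpr], hc⟩
    have h2 : sz (ss.zip ts ++ rest) < sz ((Term.app f ss, Term.app g ts) :: rest) := by
      have := sz_zip_le ss ts
      simp only [sz_append, sz_cons, size_app]
      omega
    rcases lt_or_eq_of_le h1 with h | h
    · exact Prod.Lex.left _ _ h
    · rw [h]; exact Prod.Lex.right _ h2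

theorem sub1_subst_eq {x : ℕ} {t : Term F} {θ : ℕ → Term F} (h : θ x = t.subst θ)
    (u : Term F) : (u.subst (sub1 x t)).subst θ = u.subst θ := by
  rw [subst_subst]
  apply subst_congr
  intro y _
  by_cases hxy : y = x
  · subst hxy; simp [h]
  · simp [sub1_other _ hxy]

theorem subst_sub1_self {x : ℕ} {t : Term F} (hx : x ∉ t.varsList) :
    t.subst (sub1 x t) = t :=
  subst_eq_self_of_vars (fun y hy => sub1_other _ (fun e => hx (e ▸ hy)))

theorem map_eq_of_zip {α β : Type*} :
    ∀ {ss ts : List α}, ss.length = ts.length → ∀ (f : α → β),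
      (∀ pr ∈ ss.zip ts, f pr.1 = f pr.2) → ss.map f = ts.map f := by
  intro ss
  induction ss with
  | nil => intro ts h f _; cases ts with
    | nil => rfl
    | cons b ts => simp at h
  | cons a ss ih =>
    intro ts h f hz
    cases ts with
    | nil => simp at h
    | cons b ts =>
      simp only [List.map_cons, List.cons.injEq]
      exact ⟨hz (a, b) (by simp), ih (by simpa using h) f
        (fun pr hpr => hz pr (by simp [hpr]))⟩

theorem zip_of_map_eq {α β : Type*} :
    ∀ {ss ts : List α} (f : α → β), ss.map f = ts.map f →
      ∀ pr ∈ ss.zip ts, f pr.1 = f pr.2 := by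
  intro ss
  induction ss with
  | nil => intro ts f h pr hpr; simp at hpr
  | cons a ss ih =>
    intro ts f h pr hpr
    cases ts with
    | nil => simp at hpr
    | cons b ts =>
      simp only [List.map_cons, List.cons.injEq] at h
      simp only [List.zip_cons_cons, List.mem_cons] at hpr
      rcases hpr with rfl | hpr
      · exact h.1
      · exact ih f h.2 pr hpr

theorem unify_sound : ∀ {P : List (Term F × Term F)} {μ : ℕ → Term F},
    unify P = some μ → ∀ pr ∈ P, pr.1.subst μ = pr.2.subst μ := by
  intro P
  induction P using unify.induct with
  | case1 => intro μ h pr hpr; simp at hpr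
  | case2 x rest ih =>
    intro μ h pr hpr
    rw [unify] at h
    simp only [dif_pos rfl] at h
    rcases List.mem_cons.1 hpr with rfl | hpr
    · rfl
    · exact ih h pr hpr
  | case3 x t rest hne hocc =>
    intro μ h pr hpr
    rw [unify] at h
    simp only [dif_neg hne, dif_pos hocc] at h
    exact absurd h (by simp)
  | case4 x t rest hne hocc ih =>
    intro μ h pr hpr
    rw [unify] at h
    simp only [dif_neg hne, dif_neg hocc, Option.map_eq_some_iff] at h
    obtain ⟨μ', hμ', rfl⟩ := h
    rcases List.mem_cons.1 hpr with rfl | hpr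
    · show Term.subst _ (Term.var x) = _
      rw [subst_var, sub1_same]
      calc t.subst μ' = (t.subst (sub1 x t)).subst μ' := by rw [subst_sub1_self hocc]
      _ = t.subst (fun y => ((sub1 x t) y).subst μ') := by rw [subst_subst]
    · have := ih hμ' (pr.1.subst (sub1 x t), pr.2.subst (sub1 x t))
        (List.mem_map.2 ⟨pr, hpr, rfl⟩)
      simpa only [subst_subst] using this
  | case5 f ss x rest hocc =>
    intro μ h pr hpr
    rw [unify] at h
    simp only [dif_pos hocc] at h
    exact absurd h (by simp)
  | case6 f ss x rest hocc ih =>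
    intro μ h pr hpr
    rw [unify] at h
    simp only [dif_neg hocc, Option.map_eq_some_iff] at h
    obtain ⟨μ', hμ', rfl⟩ := h
    rcases List.mem_cons.1 hpr with rfl | hpr
    · show _ = Term.subst _ (Term.var x)
      rw [subst_var, sub1_same]
      calc ((Term.app f ss)).subst (fun y => ((sub1 x (Term.app f ss)) y).subst μ')
          = ((Term.app f ss).subst (sub1 x (Term.app f ss))).subst μ' := by rw [subst_subst]
      _ = (Term.app f ss).subst μ' := by rw [subst_sub1_self hocc]
    · have := ih hμ' (pr.1.subst (sub1 x (Term.app f ss)), pr.2.subst (sub1 x (Term.app f ss)))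
        (List.mem_map.2 ⟨pr, hpr, rfl⟩)
      simpa only [subst_subst] using this
  | case7 f ss g ts rest hd ih =>
    intro μ h pr hpr
    rw [unify] at h
    simp only [dif_pos hd] at h
    rcases List.mem_cons.1 hpr with rfl | hpr
    · obtain ⟨rfl, hlen⟩ := hd
      simp only [subst_app]
      congr 1
      exact map_eq_of_zip hlen _ (fun q hq => ih h q (List.mem_append.2 (Or.inl hq)))
    · exact ih h pr (List.mem_append.2 (Or.inr hpr))
  | case8 f ss g ts rest hd =>
    intro μ h pr hpr
    rw [unify] at h
    simp only [dif_neg hd] at h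
    exact absurd h (by simp)

theorem unify_general : ∀ {P : List (Term F × Term F)} {μ : ℕ → Term F},
    unify P = some μ → ∀ θ : ℕ → Term F,
      (∀ pr ∈ P, pr.1.subst θ = pr.2.subst θ) → ∀ y, (μ y).subst θ = θ y := by
  intro P
  induction P using unify.induct with
  | case1 =>
    intro μ h θ hθ y
    rw [unify] at h
    simp only [Option.some.injEq] at h
    subst h; simp
  | case2 x rest ih =>
    intro μ h θ hθ y
    rw [unify] at h
    simp only [dif_pos rfl] at h
    exact ih h θ (fun pr hpr => hθ pr (List.mem_cons.2 (Or.inr hpr))) y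
  | case3 x t rest hne hocc =>
    intro μ h; rw [unify] at h; simp only [dif_neg hne, dif_pos hocc] at h
    exact absurd h (by simp)
  | case4 x t rest hne hocc ih =>
    intro μ h θ hθ y
    rw [unify] at h
    simp only [dif_neg hne, dif_neg hocc, Option.map_eq_some_iff] at h
    obtain ⟨μ', hμ', rfl⟩ := h
    have hx : θ x = t.subst θ := by
      have := hθ (Term.var x, t) (by simp); simpa using this
    have hrest : ∀ pr ∈ applyP (sub1 x t) rest, pr.1.subst θ = pr.2.subst θ := by
      rintro pr hpr
      obtain ⟨q, hq, rfl⟩ := List.mem_map.1 hpr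
      simp only
      rw [sub1_subst_eq hx, sub1_subst_eq hx]
      exact hθ q (List.mem_cons.2 (Or.inr hq))
    have ihy := ih hμ' θ hrest
    have hfun : (fun z => (μ' z).subst θ) = θ := funext ihy
    show ((((sub1 x t) y).subst μ').subst θ) = θ y
    rw [subst_subst, hfun]
    by_cases hxy : y = x
    · subst hxy; rw [sub1_same]; exact hx.symm
    · rw [sub1_other _ hxy]; simp
  | case5 f ss x rest hocc =>
    intro μ h; rw [unify] at h; simp only [dif_pos hocc] at h
    exact absurd h (by simp)
  | case6 f ss x rest hocc ih =>
    intro μ h θ hθ y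
    rw [unify] at h
    simp only [dif_neg hocc, Option.map_eq_some_iff] at h
    obtain ⟨μ', hμ', rfl⟩ := h
    have hx : θ x = (Term.app f ss).subst θ := by
      have := hθ (Term.app f ss, Term.var x) (by simp)
      simpa using this.symm
    have hrest : ∀ pr ∈ applyP (sub1 x (Term.app f ss)) rest,
        pr.1.subst θ = pr.2.subst θ := by
      rintro pr hpr
      obtain ⟨q, hq, rfl⟩ := List.mem_map.1 hpr
      simp only
      rw [sub1_subst_eq hx, sub1_subst_eq hx]
      exact hθ q (List.mem_cons.2 (Or.inr hq))
    have ihy := ih hμ' θ hrest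
    have hfun : (fun z => (μ' z).subst θ) = θ := funext ihy
    show ((((sub1 x (Term.app f ss)) y).subst μ').subst θ) = θ y
    rw [subst_subst, hfun]
    by_cases hxy : y = x
    · subst hxy; rw [sub1_same]; exact hx.symm
    · rw [sub1_other _ hxy]; simp
  | case7 f ss g ts rest hd ih =>
    intro μ h θ hθ y
    rw [unify] at h
    simp only [dif_pos hd] at h
    refine ih h θ ?_ y
    intro pr hpr
    rcases List.mem_append.1 hpr with hpr | hpr
    · have hhead := hθ (Term.app f ss, Term.app g ts) (by simp)
      simp only [subst_app] at hhead
      obtain ⟨rfl, hmap⟩ := Term.app.inj hhead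
      exact zip_of_map_eq _ hmap pr hpr
    · exact hθ pr (List.mem_cons.2 (Or.inr hpr))
  | case8 f ss g ts rest hd =>
    intro μ h; rw [unify] at h; simp only [dif_neg hd] at h
    exact absurd h (by simp)

theorem unify_complete : ∀ {P : List (Term F × Term F)} (θ : ℕ → Term F),
    (∀ pr ∈ P, pr.1.subst θ = pr.2.subst θ) → ∃ μ, unify P = some μ := by
  intro P
  induction P using unify.induct with
  | case1 => intro θ hθ; exact ⟨Term.var, by rw [unify]⟩
  | case2 x rest ih =>
    intro θ hθ
    obtain ⟨μ, hμ⟩ := ih θ (fun pr hpr => hθ pr (List.mem_cons.2 (Or.inr hpr)))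
    exact ⟨μ, by rw [unify]; simpa only [dif_pos rfl, dite_true] using hμ⟩
  | case3 x t rest hne hocc =>
    intro θ hθ
    exfalso
    have hx : θ x = t.subst θ := by simpa using hθ (Term.var x, t) (by simp)
    match t, hne, hocc with
    | Term.var y, hne, hocc =>
      simp at hocc
      exact hne (by rw [hocc])
    | Term.app f ts, _, hocc =>
      have := size_lt_subst θ hocc
      rw [← hx] at this
      omega
  | case4 x t rest hne hocc ih =>
    intro θ hθ
    have hx : θ x = t.subst θ := by simpa using hθ (Term.var x, t) (by simp)
    obtain ⟨μ, hμ⟩ := ih θ (by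
      rintro pr hpr
      obtain ⟨q, hq, rfl⟩ := List.mem_map.1 hpr
      simp only
      rw [sub1_subst_eq hx, sub1_subst_eq hx]
      exact hθ q (List.mem_cons.2 (Or.inr hq)))
    refine ⟨fun y => ((sub1 x t) y).subst μ, ?_⟩
    rw [unify]
    simp only [dif_neg hne, dif_neg hocc, hμ, Option.map_some]
  | case5 f ss x rest hocc =>
    intro θ hθ
    exfalso
    have hx : θ x = (Term.app f ss).subst θ := by
      simpa using (hθ (Term.app f ss, Term.var x) (by simp)).symm
    have := size_lt_subst θ hocc
    rw [← hx] at this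
    omega
  | case6 f ss x rest hocc ih =>
    intro θ hθ
    have hx : θ x = (Term.app f ss).subst θ := by
      simpa using (hθ (Term.app f ss, Term.var x) (by simp)).symm
    obtain ⟨μ, hμ⟩ := ih θ (by
      rintro pr hpr
      obtain ⟨q, hq, rfl⟩ := List.mem_map.1 hpr
      simp only
      rw [sub1_subst_eq hx, sub1_subst_eq hx]
      exact hθ q (List.mem_cons.2 (Or.inr hq)))
    refine ⟨fun y => ((sub1 x (Term.app f ss)) y).subst μ, ?_⟩
    rw [unify]
    simp only [dif_neg hocc, hμ, Option.map_some]
  | case7 f ss g ts rest hd ih =>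
    intro θ hθ
    have hhead := hθ (Term.app f ss, Term.app g ts) (by simp)
    simp only [subst_app] at hhead
    obtain ⟨rfl, hmap⟩ := Term.app.inj hhead
    obtain ⟨μ, hμ⟩ := ih θ (by
      intro pr hpr
      rcases List.mem_append.1 hpr with hpr | hpr
      · exact zip_of_map_eq _ hmap pr hpr
      · exact hθ pr (List.mem_cons.2 (Or.inr hpr)))
    exact ⟨μ, by rw [unify, dif_pos hd]; exact hμ⟩
  | case8 f ss g ts rest hd =>
    intro θ hθ
    exfalso
    have hhead := hθ (Term.app f ss, Term.app g ts) (by simp)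
    simp only [subst_app] at hhead
    obtain ⟨rfl, hmap⟩ := Term.app.inj hhead
    have : ss.length = ts.length := by
      have := congrArg List.length hmap
      simpa using this
    exact hd ⟨rfl, this⟩

/-- Existence of a strong most general unifier. -/
theorem exists_strong_mgu {A B : Term F} {θ : ℕ → Term F} (h : A.subst θ = B.subst θ) :
    ∃ μ : ℕ → Term F, A.subst μ = B.subst μ ∧
      ∀ θ' : ℕ → Term F, A.subst θ' = B.subst θ' → ∀ y, (μ y).subst θ' = θ' y := by
  obtain ⟨μ, hμ⟩ := unify_complete (P := [(A, B)]) θ (by simpa using h)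
  refine ⟨μ, by simpa using unify_sound hμ (A, B) (by simp), fun θ' h' y =>
    unify_general hμ θ' (by simpa using h') y⟩

end Unif

variable {F : Type}

open Term

/-- Decidable (list-level) membership in `LVar`. -/
def lvarMem (ρ : Rule F) (x : ℕ) : Prop :=
  x ∈ ρ.cond.varsList ∨ (x ∈ ρ.rhs.varsList ∧ x ∉ ρ.lhs.varsList)

instance (ρ : Rule F) (x : ℕ) : Decidable (lvarMem ρ x) := by
  unfold lvarMem; infer_instance

theorem lvarMem_iff {ρ : Rule F} {x : ℕ} : lvarMem ρ x ↔ x ∈ LVar ρ := by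
  simp [lvarMem, LVar, Term.vars, Set.mem_union, Set.mem_diff, Set.mem_setOf_eq]

/-- The value-instantiating substitution of a rule. -/
def tauSub (ρ : Rule F) (ζ : ℕ → Term F) : ℕ → Term F :=
  fun x => if lvarMem ρ x then ζ x else Term.var x

theorem isVal_subst {R : LCTRS F} {t : Term F} (h : R.isVal t) (σ : ℕ → Term F) :
    t.subst σ = t := by
  obtain ⟨v, _, rfl⟩ := h; simp

theorem isVal_varsList {R : LCTRS F} {t : Term F} (h : R.isVal t) : t.varsList = [] := by
  obtain ⟨v, _, rfl⟩ := h; simp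

theorem isVal_isLogical {R : LCTRS F} (hwf : R.WF) {t : Term F} (h : R.isVal t) :
    IsLogical R.Fth t := by
  obtain ⟨v, hv, rfl⟩ := h
  exact IsLogical.app (hwf.1 hv) (by simp)

theorem subst_of_ground {t : Term F} (h : t.varsList = []) (σ : ℕ → Term F) :
    t.subst σ = t :=
  subst_eq_self_of_vars (fun x hx => by rw [h] at hx; simp at hx)

theorem ground_subst {t : Term F} {σ : ℕ → Term F}
    (h : ∀ x ∈ t.varsList, (σ x).varsList = []) : (t.subst σ).varsList = [] := by
  rw [List.eq_nil_iff_forall_not_mem]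
  intro y hy
  obtain ⟨x, hx, hyx⟩ := mem_varsList_subst.1 hy
  rw [h x hx] at hyx
  simp at hyx

@[simp] theorem varsList_conj (R : LCTRS F) (a b : Term F) :
    (R.conj a b).varsList = a.varsList ++ b.varsList := by
  simp [LCTRS.conj]

@[simp] theorem subst_conj (R : LCTRS F) (a b : Term F) (σ : ℕ → Term F) :
    (R.conj a b).subst σ = R.conj (a.subst σ) (b.subst σ) := by
  simp [LCTRS.conj]

@[simp] theorem subst_trueT (R : LCTRS F) (σ : ℕ → Term F) :
    (R.trueT).subst σ = R.trueT := by simp [LCTRS.trueT]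

theorem subst_bigConj (R : LCTRS F) (l : List (Term F)) (σ : ℕ → Term F) :
    (R.bigConj l).subst σ = R.bigConj (l.map (Term.subst σ)) := by
  induction l with
  | nil => simp [LCTRS.bigConj]
  | cons a l ih => simp [LCTRS.bigConj] at ih ⊢; rw [ih]

theorem mem_varsList_bigConj {R : LCTRS F} {l : List (Term F)} {y : ℕ} :
    y ∈ (R.bigConj l).varsList ↔ ∃ u ∈ l, y ∈ u.varsList := by
  induction l with
  | nil => simp [LCTRS.bigConj, LCTRS.trueT]
  | cons a l ih => simp [LCTRS.bigConj] at ih ⊢; rw [ih]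

@[simp] theorem bigConj_cons (R : LCTRS F) (a : Term F) (l : List (Term F)) :
    R.bigConj (a :: l) = R.conj a (R.bigConj l) := rfl

theorem isLogical_conj {R : LCTRS F} (hwf : R.WF) {a b : Term F}
    (ha : IsLogical R.Fth a) (hb : IsLogical R.Fth b) : IsLogical R.Fth (R.conj a b) := by
  refine IsLogical.app hwf.2.2.2.2.2.2.1.1 ?_
  intro u hu; simp [LCTRS.conj] at hu
  rcases hu with rfl | rfl <;> assumption

theorem isLogical_bigConj {R : LCTRS F} (hwf : R.WF) {l : List (Term F)}
    (h : ∀ u ∈ l, IsLogical R.Fth u) : IsLogical R.Fth (R.bigConj l) := by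
  induction l with
  | nil =>
    exact IsLogical.app (hwf.1 hwf.2.2.2.2.2.1) (by simp [LCTRS.bigConj, LCTRS.trueT])
  | cons a l ih =>
    rw [bigConj_cons]
    exact isLogical_conj hwf (h a (by simp)) (ih (fun u hu => h u (by simp [hu])))

theorem validC_of_ground {R : LCTRS F} {t : Term F} (hg : t.varsList = [])
    (hJ : R.J t = R.tt) : R.validC t := by
  intro γ _
  rw [subst_of_ground hg]; exact hJ

theorem J_eq_tt_of_validC {R : LCTRS F} {t : Term F} (hg : t.varsList = [])
    (h : R.validC t) : R.J t = R.tt := by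
  have := h Term.var (by intro x hx; simp [Term.vars, hg] at hx)
  rwa [Term.subst_id] at this

theorem J_conj_split {R : LCTRS F} (hwf : R.WF) {a b : Term F}
    (ha : IsLogical R.Fth a) (hb : IsLogical R.Fth b)
    (hga : a.varsList = []) (hgb : b.varsList = [])
    (h : R.J (R.conj a b) = R.tt) : R.J a = R.tt ∧ R.J b = R.tt :=
  (hwf.2.2.2.2.2.2.2.2.2.2.1 a b ha hb hga hgb).1 h


variable {F : Type}
open Term

theorem mem_varsList_rename_equiv (π : ℕ ≃ ℕ) {x : ℕ} {t : Term F} :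
    π x ∈ (t.rename π).varsList ↔ x ∈ t.varsList := by
  rw [mem_varsList_rename]
  constructor
  · rintro ⟨y, hy, hxy⟩
    rwa [π.injective hxy]
  · intro h; exact ⟨x, h, rfl⟩

theorem lvarMem_rename {ρ : Rule F} {π : ℕ ≃ ℕ} {ρc : Rule F}
    (h1 : ρc.lhs = ρ.lhs.rename π) (h2 : ρc.rhs = ρ.rhs.rename π)
    (h3 : ρc.cond = ρ.cond.rename π) {x : ℕ} :
    lvarMem ρc (π x) ↔ lvarMem ρ x := by
  simp only [lvarMem, h1, h2, h3, mem_varsList_rename_equiv]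

theorem subst_tauSub_eq_of_vars {ρ : Rule F} {ζ : ℕ → Term F} {t : Term F}
    (h : ∀ x ∈ t.varsList, lvarMem ρ x) : t.subst (tauSub ρ ζ) = t.subst ζ :=
  subst_congr (fun x hx => by simp [tauSub, h x hx])

theorem varsList_subst_tauSub {R : LCTRS F} {ρ : Rule F} {ζ : ℕ → Term F}
    (hval : ∀ x, lvarMem ρ x → R.isVal (ζ x)) {t : Term F} :
    ∀ y ∈ (t.subst (tauSub ρ ζ)).varsList, y ∈ t.varsList ∧ ¬ lvarMem ρ y := by
  intro y hy
  obtain ⟨x, hx, hyx⟩ := mem_varsList_subst.1 hy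
  by_cases hl : lvarMem ρ x
  · exfalso
    simp only [tauSub, if_pos hl] at hyx
    rw [isVal_varsList (hval x hl)] at hyx
    simp at hyx
  · simp only [tauSub, if_neg hl] at hyx
    simp at hyx
    subst hyx
    exact ⟨hx, hl⟩

theorem exists_vals {R : LCTRS F} : ∀ {l : List (Term F)}, (∀ u ∈ l, R.isVal u) →
    ∃ vs : List F, vs.length = l.length ∧ (∀ v ∈ vs, v ∈ R.Val) ∧
      l = vs.map (fun v => Term.app v []) := by
  intro l
  induction l with
  | nil => intro _; exact ⟨[], by simp⟩
  | cons a l ih =>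
    intro h
    obtain ⟨vs, hlen, hval, hmap⟩ := ih (fun u hu => h u (by simp [hu]))
    obtain ⟨v, hv, rfl⟩ := h a (by simp)
    refine ⟨v :: vs, by simp [hlen], ?_, by simp [← hmap]⟩
    intro w hw
    rcases List.mem_cons.1 hw with rfl | hw
    · exact hv
    · exact hval w hw

theorem isLogical_rules_cond {R : LCTRS F} (hwf : R.WF) {ρ : Rule F} (h : ρ ∈ R.Rrc) :
    IsLogical R.Fth ρ.cond := by
  rcases h with h | h
  · exact (hwf.2.2.2.2.2.2.2.2.2.2.2.2 ρ h).2
  · obtain ⟨f, hf, rfl⟩ := h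
    refine IsLogical.app hwf.2.2.2.2.2.2.2.2.1.1 ?_
    intro u hu
    simp [LCTRS.calcRule] at hu
    rcases hu with rfl | rfl
    · exact IsLogical.var _
    · refine IsLogical.app hf.1 ?_
      intro w hw
      simp at hw
      obtain ⟨i, _, rfl⟩ := hw
      exact IsLogical.var _

theorem rename_ground {t : Term F} (h : t.varsList = []) (π : ℕ → ℕ) :
    t.rename π = t := by
  rw [Term.rename]; exact subst_of_ground h _


variable {F : Type}
open Term

theorem bar_rule_of {R : LCTRS F} (hwf : R.WF) {ρ' ρc : Rule F} (h' : ρ' ∈ R.Rrc)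
    (π : ℕ ≃ ℕ) (h1 : ρc.lhs = ρ'.lhs.rename π) (h2 : ρc.rhs = ρ'.rhs.rename π)
    (h3 : ρc.cond = ρ'.cond.rename π) (ζ : ℕ → Term F)
    (hval : ∀ x, lvarMem ρc x → R.isVal (ζ x))
    (hvalid : R.validC (ρc.cond.subst ζ)) :
    ∃ lr ∈ barTRS R,
      IsVariantP lr (ρc.lhs.subst (tauSub ρc ζ), ρc.rhs.subst (tauSub ρc ζ)) := by
  set ζ' : ℕ → Term F := fun x => ζ (π x) with hζ'
  set τ' : ℕ → Term F := tauSub ρ' ζ' with hτ'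
  have hval' : ∀ x, lvarMem ρ' x → R.isVal (ζ' x) :=
    fun x hx => hval (π x) ((lvarMem_rename h1 h2 h3).2 hx)
  have hpt : ∀ x, (τ' x).rename π = tauSub ρc ζ (π x) := by
    intro x
    by_cases hx : lvarMem ρ' x
    · have hx' : lvarMem ρc (π x) := (lvarMem_rename h1 h2 h3).2 hx
      simp only [hτ', tauSub, if_pos hx, if_pos hx']
      exact rename_ground (isVal_varsList (hval' x hx)) π
    · have hx' : ¬ lvarMem ρc (π x) := fun h => hx ((lvarMem_rename h1 h2 h3).1 h)
      simp only [hτ', tauSub, if_neg hx, if_neg hx']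
      rw [Term.rename]; simp
  have hcomp : ∀ u : Term F, (u.subst τ').rename π = (u.rename π).subst (tauSub ρc ζ) := by
    intro u
    rw [Term.rename, subst_subst, rename_subst]
    exact subst_congr (fun x _ => hpt x)
  have hlhs : (ρ'.lhs.subst τ').rename π = ρc.lhs.subst (tauSub ρc ζ) := by
    rw [hcomp, ← h1]
  have hrhs : (ρ'.rhs.subst τ').rename π = ρc.rhs.subst (tauSub ρc ζ) := by
    rw [hcomp, ← h2]
  have hcondG : (ρ'.cond.subst τ').varsList = [] := by
    apply ground_subst
    intro x hx
    have hcx : lvarMem ρ' x := Or.inl hx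
    have hτx : τ' x = ζ' x := by simp [hτ', tauSub, hcx]
    rw [hτx]
    exact isVal_varsList (hval' x hcx)
  have hcondeq : ρ'.cond.subst τ' = ρc.cond.subst ζ := by
    have h4 := hcomp ρ'.cond
    rw [rename_ground hcondG, ← h3] at h4
    rw [h4]
    exact subst_tauSub_eq_of_vars (fun x hx => Or.inl hx)
  have hvalidτ : R.validC (ρ'.cond.subst τ') := by rw [hcondeq]; exact hvalid
  have hvalτ : ∀ x, lvarMem ρ' x → R.isVal (τ' x) := by
    intro x hx
    simp only [hτ', tauSub, if_pos hx]
    exact hval' x hx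
  rcases h' with hr | hc
  · refine ⟨(ρ'.lhs.subst τ', ρ'.rhs.subst τ'), Or.inl ⟨ρ', hr, τ', ?_, ?_, hvalidτ, rfl⟩,
      ⟨π, hlhs.symm, hrhs.symm⟩⟩
    · ext x
      simp only [Dom, Set.mem_setOf_eq, ← lvarMem_iff]
      constructor
      · intro hne
        by_contra hx
        exact hne (by simp [hτ', tauSub, hx])
      · intro hx
        obtain ⟨v, _, hv⟩ := hvalτ x hx
        rw [hv]
        simp
    · intro x hx
      exact hvalτ x (lvarMem_iff.2 hx)
  · obtain ⟨f, hf, rfl⟩ := hc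
    set n := R.arity f with hn
    have hxs : (R.calcRule f).lhs = Term.app f ((List.range n).map Term.var) := rfl
    have hcondform : (R.calcRule f).cond =
        Term.app R.eqS [Term.var n, Term.app f ((List.range n).map Term.var)] := rfl
    have hcondvars : (R.calcRule f).cond.varsList = n :: List.range n := by
      rw [hcondform]
      simp [List.flatten_eq_nil_iff]
      induction (List.range n) with
      | nil => simp
      | cons a l ih => simp [ih]
    have hlv : ∀ i, i = n ∨ i < n → lvarMem (R.calcRule f) i := by
      intro i hi
      left
      rw [hcondvars]
      rcases hi with rfl | hi
      · simp
      · simp [hi]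
    have hvals : ∀ u ∈ (List.range n).map τ', R.isVal u := by
      intro u hu
      obtain ⟨i, hi, rfl⟩ := List.mem_map.1 hu
      exact hvalτ i (hlv i (Or.inr (List.mem_range.1 hi)))
    obtain ⟨vs, hlen, hvs, hmapeq⟩ := exists_vals hvals
    obtain ⟨w, hw, hwτ⟩ := hvalτ n (hlv n (Or.inl rfl))
    have hlhsτ : (R.calcRule f).lhs.subst τ' = Term.app f (vs.map fun v => Term.app v []) := by
      have hmm : List.map (Term.subst τ' ∘ Term.var) (List.range n) =
          List.map τ' (List.range n) := List.map_congr_left (fun i _ => by simp)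
      rw [hxs, subst_app, List.map_map, hmm, hmapeq]
    have hrhsτ : (R.calcRule f).rhs.subst τ' = Term.app w [] := by
      have hr : (R.calcRule f).rhs = Term.var n := rfl
      rw [hr, subst_var, hwτ]
    have hcondτ : (R.calcRule f).cond.subst τ' =
        Term.app R.eqS [Term.app w [], Term.app f (vs.map fun v => Term.app v [])] := by
      rw [hcondform, subst_app]
      simp only [List.map_cons, List.map_nil, subst_var, hwτ]
      rw [← hxs, hlhsτ]
    have hJtt := J_eq_tt_of_validC hcondG hvalidτ
    rw [hcondτ] at hJtt
    have hlogb : IsLogical R.Fth (Term.app f (vs.map fun v => Term.app v [])) :=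
      IsLogical.app hf.1 (fun u hu => by
        obtain ⟨v, hv, rfl⟩ := List.mem_map.1 hu
        exact isVal_isLogical hwf ⟨v, hvs v hv, rfl⟩)
    have hgb : (Term.app f (vs.map fun v => Term.app v [])).varsList = [] := by
      simp [List.flatten_eq_nil_iff]
    have heqt := (hwf.2.2.2.2.2.2.2.2.2.2.2.1 (Term.app w [])
      (Term.app f (vs.map fun v => Term.app v [])) (isVal_isLogical hwf ⟨w, hw, rfl⟩)
      hlogb (show LCTRS.Ground _ by simp [LCTRS.Ground]) hgb).1 hJtt
    have hJw : R.J (Term.app w []) = w := hwf.2.2.2.2.1 w hw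
    have hJb : R.J (Term.app f (vs.map fun v => Term.app v [])) = w := by
      rw [← heqt, hJw]
    refine ⟨(Term.app f (vs.map fun v => Term.app v []),
             Term.app (R.J (Term.app f (vs.map fun v => Term.app v []))) []),
      Or.inr ⟨f, hf, vs, by simpa using hlen, hvs, rfl⟩, ⟨π, ?_, ?_⟩⟩
    · show subst (tauSub ρc ζ) ρc.lhs = rename (⇑π) (Term.app f (vs.map fun v => Term.app v []))
      rw [← hlhsτ, hlhs]
    · show subst (tauSub ρc ζ) ρc.rhs = rename (⇑π) (Term.app _ [])
      rw [hJb, ← hrhsτ, hrhs]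

variable {F : Type}
open Term

theorem mem_EVarList {ρ : Rule F} {x : ℕ} :
    x ∈ EVarList ρ ↔ x ∈ ρ.rhs.varsList ∧ x ∉ ρ.lhs.varsList ∧ x ∉ ρ.cond.varsList := by
  simp [EVarList, List.mem_filter]

theorem isLogical_rename {Fth : Set F} {t : Term F} (h : IsLogical Fth t) (π : ℕ → ℕ) :
    IsLogical Fth (t.rename π) :=
  IsLogical.subst h (fun x _ => IsLogical.var _)

theorem main_statement (R : LCTRS F) (hwf : R.WF) :
    ∀ (p : List ℕ) (s t φ : Term F), IsCCPAt R p s t φ →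
      ∀ σ : ℕ → Term F, R.respectsC σ φ →
        s.subst σ = t.subst σ ∨
        ∃ (q : List ℕ) (u v : Term F) (δ : ℕ → Term F),
          IsCPAt (barTRS R) q u v ∧ s.subst σ = u.subst δ ∧ t.subst σ = v.subst δ := by
  classical
  intro p s t φ hccp σ hσ
  obtain ⟨ρ₁, ρ₂, σ₀, l2p, ⟨ρ₁', hρ₁m, hv₁⟩, ⟨ρ₂', hρ₂m, hv₂⟩, hdisj, hsubp, hfun, hmgu,
    hvv, hsat, hroot0, hrepl, ht, hφ⟩ := hccp
  obtain ⟨π₁, e₁l, e₁r, e₁c⟩ := hv₁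
  obtain ⟨π₂, e₂l, e₂r, e₂c⟩ := hv₂
  set g : ℕ → Term F := fun y => if y ∈ φ.varsList then σ y else Term.var y with hg
  set ζ : ℕ → Term F := fun x => (σ₀ x).subst g with hζ
  set τ₁ : ℕ → Term F := tauSub ρ₁ ζ with hτ₁
  set τ₂ : ℕ → Term F := tauSub ρ₂ ζ with hτ₂
  set ν : ℕ → Term F := fun x => (ζ x).subst σ with hν
  -- σ maps constraint variables to values
  have hσv : ∀ y ∈ φ.varsList, R.isVal (σ y) := fun y hy => hσ.1 y hy
  -- variables of σ₀-images of logical variables occur in φ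
  have hmemφ : ∀ y, (y ∈ (ρ₁.cond.subst σ₀).varsList ∨ y ∈ (ρ₂.cond.subst σ₀).varsList ∨
      y ∈ ((R.conj (R.EC ρ₁) (R.EC ρ₂)).subst σ₀).varsList) → y ∈ φ.varsList := by
    intro y hy
    rw [hφ, varsList_conj, varsList_conj]
    simp only [List.mem_append]
    tauto
  have hECmem : ∀ (ρ : Rule F) (x : ℕ), x ∈ EVarList ρ → ∀ y ∈ (σ₀ x).varsList,
      y ∈ ((R.EC ρ).subst σ₀).varsList := by
    intro ρ x hE y hy
    rw [LCTRS.EC, subst_bigConj]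
    apply mem_varsList_bigConj.2
    refine ⟨(Term.app R.eqS [Term.var x, Term.var x]).subst σ₀,
      List.mem_map.2 ⟨_, List.mem_map.2 ⟨x, hE, rfl⟩, rfl⟩, ?_⟩
    rw [subst_app]
    simp [hy]
  have hM1 : ∀ x, (lvarMem ρ₁ x ∨ lvarMem ρ₂ x) → ∀ y ∈ (σ₀ x).varsList, y ∈ φ.varsList := by
    intro x hx y hy
    apply hmemφ
    rcases hx with hx | hx
    · by_cases hc : x ∈ ρ₁.cond.varsList
      · exact Or.inl (mem_varsList_subst.2 ⟨x, hc, hy⟩)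
      · have hE : x ∈ EVarList ρ₁ := by
          rcases hx with hx | ⟨h1, h2⟩
          · exact absurd hx hc
          · exact mem_EVarList.2 ⟨h1, h2, hc⟩
        refine Or.inr (Or.inr ?_)
        rw [subst_conj, varsList_conj]
        exact List.mem_append.2 (Or.inl (hECmem ρ₁ x hE y hy))
    · by_cases hc : x ∈ ρ₂.cond.varsList
      · exact Or.inr (Or.inl (mem_varsList_subst.2 ⟨x, hc, hy⟩))
      · have hE : x ∈ EVarList ρ₂ := by
          rcases hx with hx | ⟨h1, h2⟩
          · exact absurd hx hc
          · exact mem_EVarList.2 ⟨h1, h2, hc⟩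
        refine Or.inr (Or.inr ?_)
        rw [subst_conj, varsList_conj]
        exact List.mem_append.2 (Or.inr (hECmem ρ₂ x hE y hy))
  -- hvv in lvarMem terms
  have hvv' : ∀ x, (lvarMem ρ₁ x ∨ lvarMem ρ₂ x) →
      R.isVal (σ₀ x) ∨ ∃ y, σ₀ x = Term.var y := by
    intro x hx
    refine hvv x ?_
    rcases hx with hx | hx
    · exact Set.mem_union_left _ (lvarMem_iff.1 hx)
    · exact Set.mem_union_right _ (lvarMem_iff.1 hx)
  -- ζ maps logical variables to values
  have hvalζ : ∀ x, (lvarMem ρ₁ x ∨ lvarMem ρ₂ x) → R.isVal (ζ x) := by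
    intro x hx
    rcases hvv' x hx with hval | ⟨y, hy⟩
    · rw [hζ]; simp only; rw [isVal_subst hval]; exact hval
    · have hyφ : y ∈ φ.varsList := hM1 x hx y (by simp [hy])
      rw [hζ]; simp only [hy, subst_var, hg, if_pos hyφ]
      exact hσv y hyφ
  have hval₁ : ∀ x, lvarMem ρ₁ x → R.isVal (ζ x) := fun x hx => hvalζ x (Or.inl hx)
  have hval₂ : ∀ x, lvarMem ρ₂ x → R.isVal (ζ x) := fun x hx => hvalζ x (Or.inr hx)
  -- g then σ is σ
  have hgσ : ∀ u : Term F, (u.subst g).subst σ = u.subst σ := by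
    intro u
    rw [subst_subst]
    apply subst_congr
    intro y _
    by_cases hy : y ∈ φ.varsList
    · simp only [hg, if_pos hy]
      exact isVal_subst (hσv y hy) σ
    · simp [hg, if_neg hy]
  -- pointwise: ζ then σ equals σ₀ then σ on logical variables
  have hptν : ∀ x, (lvarMem ρ₁ x ∨ lvarMem ρ₂ x) → ζ x = (σ₀ x).subst σ := by
    intro x hx
    rcases hvv' x hx with hval | ⟨y, hy⟩
    · rw [hζ]; simp only; rw [isVal_subst hval, isVal_subst hval]
    · have hyφ : y ∈ φ.varsList := hM1 x hx y (by simp [hy])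
      rw [hζ]; simp only [hy, subst_var, hg, if_pos hyφ]
  -- key composition lemma
  have hτν : ∀ (ρ : Rule F), (∀ x, lvarMem ρ x → ζ x = (σ₀ x).subst σ ∧ R.isVal (ζ x)) →
      ∀ u : Term F, (u.subst (tauSub ρ ζ)).subst ν = (u.subst σ₀).subst σ := by
    intro ρ hρ u
    rw [subst_subst, subst_subst]
    apply subst_congr
    intro x _
    by_cases hx : lvarMem ρ x
    · have h1 := (hρ x hx).1
      have h2 := (hρ x hx).2
      simp only [tauSub, if_pos hx]
      rw [isVal_subst h2, h1]
    · simp only [tauSub, if_neg hx, subst_var, hν, hζ]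
      rw [subst_subst]
      have : (fun y => (g y).subst σ) = σ := by
        funext y
        by_cases hy : y ∈ φ.varsList
        · simp only [hg, if_pos hy]; exact isVal_subst (hσv y hy) σ
        · simp [hg, if_neg hy]
      rw [this]
  have hliftν₁ : ∀ u : Term F, (u.subst τ₁).subst ν = (u.subst σ₀).subst σ :=
    hτν ρ₁ (fun x hx => ⟨hptν x (Or.inl hx), hval₁ x hx⟩)
  have hliftν₂ : ∀ u : Term F, (u.subst τ₂).subst ν = (u.subst σ₀).subst σ :=
    hτν ρ₂ (fun x hx => ⟨hptν x (Or.inr hx), hval₂ x hx⟩)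
  -- ν unifies the instantiated terms
  have hνunif : (ρ₁.lhs.subst τ₁).subst ν = (l2p.subst τ₂).subst ν := by
    rw [hliftν₁, hliftν₂, hmgu.1]
  obtain ⟨μ, hμu, hμg⟩ := Unif.exists_strong_mgu hνunif
  have hμν : ∀ X : Term F, (X.subst μ).subst ν = X.subst ν := by
    intro X
    rw [subst_subst]
    have : (fun y => (μ y).subst ν) = ν := funext (hμg ν hνunif)
    rw [this]
  -- validity of instantiated conditions
  have hvv2 : ∀ x, (lvarMem ρ₁ x ∨ lvarMem ρ₂ x) → IsLogical R.Fth (σ₀ x) := by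
    intro x hx
    rcases hvv' x hx with hval | ⟨y, hy⟩
    · exact isVal_isLogical hwf hval
    · rw [hy]; exact IsLogical.var _
  have hlogc₁ : IsLogical R.Fth ρ₁.cond := by
    rw [e₁c]; exact isLogical_rename (isLogical_rules_cond hwf hρ₁m) _
  have hlogc₂ : IsLogical R.Fth ρ₂.cond := by
    rw [e₂c]; exact isLogical_rename (isLogical_rules_cond hwf hρ₂m) _
  have hloga : IsLogical R.Fth (ρ₁.cond.subst σ₀) :=
    IsLogical.subst hlogc₁ (fun x hx => hvv2 x (Or.inl (Or.inl hx)))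
  have hlogb : IsLogical R.Fth (ρ₂.cond.subst σ₀) :=
    IsLogical.subst hlogc₂ (fun x hx => hvv2 x (Or.inr (Or.inl hx)))
  have hEClog : ∀ ρ : Rule F, IsLogical R.Fth (R.EC ρ) := by
    intro ρ
    apply isLogical_bigConj hwf
    intro u hu
    obtain ⟨x, hx, rfl⟩ := List.mem_map.1 hu
    refine IsLogical.app hwf.2.2.2.2.2.2.2.2.1.1 ?_
    intro w hw
    simp at hw
    rcases hw with rfl | rfl <;> exact IsLogical.var _
  have hECvars : ∀ (ρ : Rule F) (x : ℕ), x ∈ (R.EC ρ).varsList → x ∈ EVarList ρ := by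
    intro ρ x hx
    rw [LCTRS.EC] at hx
    obtain ⟨u, hu, hxu⟩ := mem_varsList_bigConj.1 hx
    obtain ⟨z, hz, rfl⟩ := List.mem_map.1 hu
    simp at hxu
    subst hxu
    exact hz
  have hlogecc : IsLogical R.Fth ((R.conj (R.EC ρ₁) (R.EC ρ₂)).subst σ₀) := by
    apply IsLogical.subst (isLogical_conj hwf (hEClog ρ₁) (hEClog ρ₂))
    intro x hx
    rw [varsList_conj] at hx
    rcases List.mem_append.1 hx with hx | hx
    · have hE := mem_EVarList.1 (hECvars ρ₁ x hx)
      exact hvv2 x (Or.inl (Or.inr ⟨hE.1, hE.2.1⟩))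
    · have hE := mem_EVarList.1 (hECvars ρ₂ x hx)
      exact hvv2 x (Or.inr (Or.inr ⟨hE.1, hE.2.1⟩))
  have hgnd : ∀ d : Term F, (∀ y ∈ d.varsList, y ∈ φ.varsList) → (d.subst σ).varsList = [] :=
    fun d hd => ground_subst (fun y hy => isVal_varsList (hσv y (hd y hy)))
  have hlogσd : ∀ d : Term F, IsLogical R.Fth d → (∀ y ∈ d.varsList, y ∈ φ.varsList) →
      IsLogical R.Fth (d.subst σ) :=
    fun d hld hd => IsLogical.subst hld (fun y hy => isVal_isLogical hwf (hσv y (hd y hy)))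
  have haφ : ∀ y ∈ (ρ₁.cond.subst σ₀).varsList, y ∈ φ.varsList :=
    fun y hy => hmemφ y (Or.inl hy)
  have hbφ : ∀ y ∈ (ρ₂.cond.subst σ₀).varsList, y ∈ φ.varsList :=
    fun y hy => hmemφ y (Or.inr (Or.inl hy))
  have hcφ : ∀ y ∈ ((R.conj (R.EC ρ₁) (R.EC ρ₂)).subst σ₀).varsList, y ∈ φ.varsList :=
    fun y hy => hmemφ y (Or.inr (Or.inr hy))
  have hφσg : (φ.subst σ).varsList = [] := hgnd φ (fun y hy => hy)
  have hJφ : R.J (φ.subst σ) = R.tt := J_eq_tt_of_validC hφσg hσ.2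
  have hφσ : φ.subst σ = R.conj ((ρ₁.cond.subst σ₀).subst σ)
      (R.conj ((ρ₂.cond.subst σ₀).subst σ)
        (((R.conj (R.EC ρ₁) (R.EC ρ₂)).subst σ₀).subst σ)) := by
    rw [hφ, subst_conj, subst_conj]
  rw [hφσ] at hJφ
  have hsplit1 := J_conj_split hwf (hlogσd _ hloga haφ)
    (isLogical_conj hwf (hlogσd _ hlogb hbφ) (hlogσd _ hlogecc hcφ))
    (hgnd _ haφ) (by rw [varsList_conj, hgnd _ hbφ, hgnd _ hcφ]; rfl) hJφ
  have hsplit2 := J_conj_split hwf (hlogσd _ hlogb hbφ) (hlogσd _ hlogecc hcφ)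
    (hgnd _ hbφ) (hgnd _ hcφ) hsplit1.2
  have hkey : ∀ (d : Term F), (∀ y ∈ (d.subst σ₀).varsList, y ∈ φ.varsList) →
      d.subst ζ = (d.subst σ₀).subst σ := by
    intro d hd
    rw [hζ, ← subst_subst]
    apply subst_congr
    intro y hy
    simp only [hg, if_pos (hd y hy)]
  have hvalidc₁ : R.validC (ρ₁.cond.subst ζ) := by
    rw [hkey ρ₁.cond haφ]
    exact validC_of_ground (hgnd _ haφ) hsplit1.1
  have hvalidc₂ : R.validC (ρ₂.cond.subst ζ) := by
    rw [hkey ρ₂.cond hbφ]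
    exact validC_of_ground (hgnd _ hbφ) hsplit2.1
  obtain ⟨lr₁, hlr₁, hvar1⟩ := bar_rule_of hwf hρ₁m π₁ e₁l e₁r e₁c ζ hval₁ hvalidc₁
  obtain ⟨lr₂, hlr₂, hvar2⟩ := bar_rule_of hwf hρ₂m π₂ e₂l e₂r e₂c ζ hval₂ hvalidc₂
  by_cases hcase : p = [] ∧ IsVariantP (ρ₁.lhs.subst τ₁, ρ₁.rhs.subst τ₁)
      (ρ₂.lhs.subst τ₂, ρ₂.rhs.subst τ₂)
  · -- trivial case
    left
    obtain ⟨hp, π', hπl, hπr⟩ := hcase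
    subst hp
    have hs : s = ρ₁.rhs.subst σ₀ := by
      rw [replaceAt_nil] at hrepl
      exact (Option.some.inj hrepl).symm
    have hl2p : l2p = ρ₂.lhs := by
      rw [subtermAt_nil] at hsubp
      exact (Option.some.inj hsubp).symm
    have hsσ : s.subst σ = (ρ₁.rhs.subst τ₁).subst ν := by rw [hs, hliftν₁]
    have htσ : t.subst σ = ((ρ₁.rhs.subst τ₁).rename π').subst ν := by
      rw [ht, ← hliftν₂, ← hπr]
    have hlhseq : (ρ₁.lhs.subst τ₁).subst (fun x => ν (π' x)) = (ρ₁.lhs.subst τ₁).subst ν := by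
      rw [← rename_subst, ← hπl, hνunif, hl2p]
    have hpointview := eqOn_vars_of_subst_eq hlhseq
    have hsubvars : ∀ y ∈ (ρ₁.rhs.subst τ₁).varsList, y ∈ (ρ₁.lhs.subst τ₁).varsList := by
      intro y hy
      obtain ⟨hy1, hy2⟩ := varsList_subst_tauSub hval₁ y hy
      have hyl : y ∈ ρ₁.lhs.varsList := by
        by_contra hc
        exact hy2 (Or.inr ⟨hy1, hc⟩)
      apply mem_varsList_subst.2
      exact ⟨y, hyl, by simp [hτ₁, tauSub, if_neg hy2]⟩
    rw [hsσ, htσ, rename_subst]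
    exact (subst_congr (fun y hy => hpointview y (hsubvars y hy))).symm
  · -- critical pair case
    right
    have hsub2 : (ρ₂.lhs.subst τ₂).subtermAt p = some (l2p.subst τ₂) := subtermAt_subst hsubp
    have hsub3 : ((ρ₂.lhs.subst τ₂).subst μ).subtermAt p = some ((l2p.subst τ₂).subst μ) :=
      subtermAt_subst hsub2
    obtain ⟨u, hu⟩ := replaceAt_isSome hsub3 ((ρ₁.rhs.subst τ₁).subst μ)
    refine ⟨p, u, (ρ₂.rhs.subst τ₂).subst μ, ν, ?_, ?_, ?_⟩
    · refine ⟨ρ₁.lhs.subst τ₁, ρ₁.rhs.subst τ₁, ρ₂.lhs.subst τ₂, ρ₂.rhs.subst τ₂, μ,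
        l2p.subst τ₂, ⟨lr₁, hlr₁, hvar1⟩, ⟨lr₂, hlr₂, hvar2⟩, ?_, hsub2, ?_,
        ⟨hμu, fun θ hθ => ⟨θ, hμg θ hθ⟩⟩, ?_, hu, rfl⟩
      · -- variable disjointness
        apply Set.eq_empty_iff_forall_notMem.2
        intro y ⟨hy1, hy2⟩
        have hr1 : y ∈ ruleVars ρ₁ := by
          rcases hy1 with hy1 | hy1
          · exact Or.inl (Or.inl (varsList_subst_tauSub hval₁ y hy1).1)
          · exact Or.inl (Or.inr (varsList_subst_tauSub hval₁ y hy1).1)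
        have hr2 : y ∈ ruleVars ρ₂ := by
          rcases hy2 with hy2 | hy2
          · exact Or.inl (Or.inl (varsList_subst_tauSub hval₂ y hy2).1)
          · exact Or.inl (Or.inr (varsList_subst_tauSub hval₂ y hy2).1)
        exact Set.eq_empty_iff_forall_notMem.1 hdisj y ⟨hr1, hr2⟩
      · -- isFun
        match l2p, hfun with
        | Term.app f0 ts0, _ => rw [subst_app]; trivial
      · -- root condition
        intro hp hvar
        exact hcase ⟨hp, hvar⟩
    · -- s σ = u ν
      have hs1 : ((ρ₂.lhs.subst σ₀).subst σ).replaceAt p ((ρ₁.rhs.subst σ₀).subst σ) =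
          some (s.subst σ) := replaceAt_subst hrepl
      have hu1 := replaceAt_subst (σ := ν) hu
      rw [hμν (ρ₂.lhs.subst τ₂), hμν (ρ₁.rhs.subst τ₁), hliftν₂ ρ₂.lhs, hliftν₁ ρ₁.rhs,
        hs1] at hu1
      exact Option.some.inj hu1
    · -- t σ = v ν
      rw [ht, ← hliftν₂ ρ₂.rhs, ← hμν (ρ₂.rhs.subst τ₂)]



/-- For every constrained critical pair `s ≈ t [φ]` of the LCTRS
`R` and every substitution `σ` with `σ ⊨ φ`, either (1) `sσ = tσ`, or (2) there
exist a critical pair `u ≈ v` of the transformed TRS `R̄` and a substitution `δ`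
such that `sσ = uδ` and `tσ = vδ`. -/
theorem ccp_instance_trivial_or_cp_instance {F : Type} (R : LCTRS F) (hwf : R.WF) :
    ∀ (p : List ℕ) (s t φ : Term F), IsCCPAt R p s t φ →
      ∀ σ : ℕ → Term F, R.respectsC σ φ →
        s.subst σ = t.subst σ ∨
        ∃ (q : List ℕ) (u v : Term F) (δ : ℕ → Term F),
          IsCPAt (barTRS R) q u v ∧ s.subst σ = u.subst δ ∧ t.subst σ = v.subst δ :=
  main_statement R hwf

end LCT
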